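/- arXiv:2109.15172 — 2 statements merged into one kernel-verified Lean document; each statement's English description precedes it below -/
import Mathlib

section
/- Let (X,d) be a metric space with bounded geometry, fix a basepoint x ∈ X, and set V_δ(l) = sup_{x₀ ∈ [x]_δ} |B_δ(x₀, l)|. Then the following dichotomy holds: (i) if lim_{l→∞} (1/l) log V_δ(l) = 0 for all δ > 0, then h_∞(X) = 0; (ii) if there exists δ > 0 such that limsup_{l→∞} (1/l) log V_δ(l) > 0, then h_∞(X) = ∞. -/
open Filter Set Metric
open scoped ENNReal

noncomputable section

/-- `p` represents a `δ`-pseudoorbit of `f` of length `n` starting at `x₀`: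
`(p 0, p 1, …, p n)` with `p 0 = x₀` and `dist (f (p i)) (p (i+1)) ≤ δ` for `i < n`.
(Only the values `p 0, …, p n` are relevant.) -/
def IsPseudoOrbit {X : Type*} [MetricSpace X] (f : X → X) (δ : ℝ) (n : ℕ) (x₀ : X)
    (p : ℕ → X) : Prop :=
  p 0 = x₀ ∧ ∀ i < n, dist (f (p i)) (p (i + 1)) ≤ δ

/-- The distance between two pseudoorbits of length `n`:
the maximum of `dist (p i) (q i)` over `0 ≤ i ≤ n`. -/
def orbitDist {X : Type*} [MetricSpace X] (n : ℕ) (p q : ℕ → X) : ℝ :=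
  (Finset.range (n + 1)).sup' (by simp) fun i => dist (p i) (q i)

/-- A family `S` of pseudoorbits of length `n` is `R`-separated if any two distinct
members are at pseudoorbit distance at least `R`. -/
def IsSepFamily {X : Type*} [MetricSpace X] (n : ℕ) (R : ℝ) (S : Set (ℕ → X)) : Prop :=
  ∀ p ∈ S, ∀ q ∈ S, p ≠ q → R ≤ orbitDist n p q

/-- `sepCard f n R δ x₀` is `s(f,n,R,δ,x₀)`: the supremum of cardinalities of
`R`-separated sets of `δ`-pseudoorbits of `f` of length `n` starting at `x₀`. -/
def sepCard {X : Type*} [MetricSpace X] (f : X → X) (n : ℕ) (R δ : ℝ) (x₀ : X) : ℝ≥0∞ :=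
  ⨆ (S : Set (ℕ → X)) (_ : ∀ p ∈ S, IsPseudoOrbit f δ n x₀ p) (_ : IsSepFamily n R S),
    (S.encard : ℝ≥0∞)

/-- Extended logarithm `[0,∞] → [0,∞]` (negative values are truncated to `0`). -/
def elog (x : ℝ≥0∞) : ℝ≥0∞ :=
  if x = ⊤ then ⊤ else ENNReal.ofReal (Real.log x.toReal)

/-- The coarse entropy of `f : X → X` computed at the basepoint `x₀`:
`h_∞(f) = lim_{δ→∞} lim_{R→∞} limsup_{n→∞} (1/n) log s(f,n,R,δ,x₀)`.
Since `s` is nondecreasing in `δ` and nonincreasing in `R`, the limits in `δ` and `R`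
are the supremum over `δ > 0` and the infimum over `R > 0`, respectively. -/
def coarseEntropyAt {X : Type*} [MetricSpace X] (f : X → X) (x₀ : X) : ℝ≥0∞ :=
  ⨆ (δ : ℝ) (_ : 0 < δ), ⨅ (R : ℝ) (_ : 0 < R),
    Filter.atTop.limsup fun n : ℕ => elog (sepCard f n R δ x₀) / (n : ℝ≥0∞)

end

/-- The `δ`-ball of radius `n` around `x₀`: the set of endpoints of `δ`-paths of
length `n` starting at `x₀`. -/
def stepBall {X : Type*} [MetricSpace X] (δ : ℝ) (x₀ : X) (n : ℕ) : Set X :=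
  {y | ∃ p : ℕ → X, p 0 = x₀ ∧ p n = y ∧ ∀ i < n, dist (p i) (p (i + 1)) ≤ δ}

/-- The `δ`-component of `x`: all points connected to `x` by some `δ`-path. -/
def deltaComponent {X : Type*} [MetricSpace X] (δ : ℝ) (x : X) : Set X :=
  {y | ∃ n : ℕ, y ∈ stepBall δ x n}

/-- A metric space has bounded geometry if for every radius `r > 0` there is a uniform
bound `C(r) ∈ ℕ` on the cardinalities of closed balls of radius `r`. -/
def HasBoundedGeometry (X : Type*) [MetricSpace X] : Prop :=
  ∀ r : ℝ, 0 < r → ∃ C : ℕ, ∀ x : X, (Metric.closedBall x r).encard ≤ C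

/-- `V_δ^x(l) = sup_{x₀ ∈ [x]_δ} |B_δ(x₀, l)|` (as an extended nonnegative real). -/
noncomputable def Vgrowth {X : Type*} [MetricSpace X] (δ : ℝ) (x : X) (l : ℕ) : ℝ≥0∞ :=
  ⨆ x₀ ∈ deltaComponent δ x, ((stepBall δ x₀ l).encard : ℝ≥0∞)

/-! ### Auxiliary lemmas -/

namespace CEAux

variable {X : Type*} [MetricSpace X]

theorem mem_stepBall {δ : ℝ} {x₀ y : X} {n : ℕ} :
    y ∈ stepBall δ x₀ n ↔ ∃ p : ℕ → X, p 0 = x₀ ∧ p n = y ∧ ∀ i < n, dist (p i) (p (i + 1)) ≤ δ :=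
  Iff.rfl

theorem self_mem_stepBall {δ : ℝ} (hδ : 0 ≤ δ) (x₀ : X) (n : ℕ) : x₀ ∈ stepBall δ x₀ n :=
  ⟨fun _ => x₀, rfl, rfl, fun _ _ => by simpa using hδ⟩

theorem stepBall_mono_len {δ : ℝ} (hδ : 0 ≤ δ) {x₀ : X} {n m : ℕ} (h : n ≤ m) :
    stepBall δ x₀ n ⊆ stepBall δ x₀ m := by
  rintro y ⟨p, hp0, hpn, hp⟩
  refine ⟨fun i => p (min i n), by simpa using hp0, by simp [min_eq_right h, hpn], ?_⟩
  intro i hi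
  dsimp only
  rcases lt_or_ge i n with h1 | h1
  · have : min i n = i := min_eq_left h1.le
    have h2 : min (i + 1) n = i + 1 := min_eq_left h1
    rw [this, h2]
    exact hp i h1
  · have : min i n = n := min_eq_right h1
    have h2 : min (i + 1) n = n := min_eq_right (h1.trans (Nat.le_succ i))
    rw [this, h2]
    simpa using hδ

theorem stepBall_trans {δ : ℝ} {x₀ y z : X} {m n : ℕ} (hy : y ∈ stepBall δ x₀ m)
    (hz : z ∈ stepBall δ y n) : z ∈ stepBall δ x₀ (m + n) := by
  obtain ⟨p, hp0, hpm, hp⟩ := hy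
  obtain ⟨q, hq0, hqn, hq⟩ := hz
  refine ⟨fun i => if i < m then p i else q (i - m), by
    rcases Nat.eq_zero_or_pos m with hm | hm
    · subst hm; simp [hq0, ← hpm, hp0]
    · simp [hm, hp0], ?_, ?_⟩
  · rcases Nat.eq_zero_or_pos n with hn | hn
    · simp only [hn, Nat.add_zero]
      rcases Nat.eq_zero_or_pos m with hm | hm
      · simp [hm, ← hqn, hn]
      · simp [← hqn, hn, hpm]
    · have : ¬ (m + n < m) := by omega
      simp [this, Nat.add_sub_cancel_left, hqn]
  · intro i hi
    dsimp only
    have key : ∀ j, m ≤ j → (if j < m then p j else q (j - m)) = q (j - m) := by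
      intro j hj; simp [Nat.not_lt.2 hj]
    rcases lt_or_ge (i + 1) m with h1 | h1
    · have h0 : i < m := by omega
      simp only [h0, h1, if_pos]
      exact hp i h0
    · rcases lt_or_ge i m with h0 | h0
      · -- i + 1 = m
        have him : i + 1 = m := by omega
        simp only [h0, if_pos, key _ h1]
        have : q (i + 1 - m) = p m := by rw [him]; simp [hq0, hpm]
        rw [this, ← him]
        exact hp i h0
      · rw [key _ h0, key _ (by omega)]
        have h2 : i + 1 - m = (i - m) + 1 := by omega
        rw [h2]
        exact hq (i - m) (by omega)

theorem stepBall_symm {δ : ℝ} {x₀ y : X} {n : ℕ} (hy : y ∈ stepBall δ x₀ n) :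
    x₀ ∈ stepBall δ y n := by
  obtain ⟨p, hp0, hpn, hp⟩ := hy
  refine ⟨fun i => p (n - i), by simpa using hpn, by simpa using hp0, ?_⟩
  intro i hi
  dsimp only
  have h1 : n - i = (n - (i + 1)) + 1 := by omega
  rw [h1, dist_comm]
  exact hp _ (by omega)

theorem dist_path_le {δ : ℝ} {p : ℕ → X} {n : ℕ} (hp : ∀ i < n, dist (p i) (p (i + 1)) ≤ δ)
    {a t : ℕ} (h : a + t ≤ n) : dist (p a) (p (a + t)) ≤ t * δ := by
  induction t with
  | zero => simp
  | succ t ih =>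
    have h1 : dist (p a) (p (a + t)) ≤ t * δ := ih (by omega)
    have h2 : dist (p (a + t)) (p (a + t + 1)) ≤ δ := hp _ (by omega)
    calc dist (p a) (p (a + (t + 1))) ≤ dist (p a) (p (a + t)) + dist (p (a + t)) (p (a + t + 1)) := by
          rw [show a + (t + 1) = a + t + 1 by omega]; exact dist_triangle _ _ _
      _ ≤ t * δ + δ := add_le_add h1 h2
      _ = (t + 1 : ℕ) * δ := by push_cast; ring

theorem stepBall_subset_closedBall {δ : ℝ} {x₀ : X} {n : ℕ} :
    stepBall δ x₀ n ⊆ Metric.closedBall x₀ (n * δ) := by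
  rintro y ⟨p, hp0, hpn, hp⟩
  have := dist_path_le hp (a := 0) (t := n) (by omega)
  simp only [Nat.zero_add, hp0, hpn] at this
  simpa [Metric.mem_closedBall, dist_comm] using this

theorem stepBall_compress {δ : ℝ} (hδ : 0 ≤ δ) {x₀ : X} {j l : ℕ} (hj : 0 < j) :
    stepBall δ x₀ (j * l) ⊆ stepBall (j * δ) x₀ l := by
  rintro y ⟨p, hp0, hpn, hp⟩
  refine ⟨fun i => p (j * min i l), by simpa using hp0, by simp [hpn], ?_⟩
  intro i hi
  dsimp only
  have h1 : min i l = i := min_eq_left hi.le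
  have h2 : min (i + 1) l = i + 1 := min_eq_left hi
  rw [h1, h2]
  have h3 : j * (i + 1) = j * i + j := by ring
  rw [h3]
  have := dist_path_le hp (a := j * i) (t := j) (by nlinarith)
  calc dist (p (j * i)) (p (j * i + j)) ≤ j * δ := this
    _ ≤ j * δ := le_refl _

theorem self_mem_deltaComponent (δ : ℝ) (x : X) : x ∈ deltaComponent δ x :=
  ⟨0, fun _ => x, rfl, rfl, fun i h => by omega⟩

theorem mem_deltaComponent_of_stepBall {δ : ℝ} {x x₀ y : X} {l : ℕ}
    (hx₀ : x₀ ∈ deltaComponent δ x) (hy : y ∈ stepBall δ x₀ l) : y ∈ deltaComponent δ x := by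
  obtain ⟨n, hn⟩ := hx₀
  exact ⟨n + l, stepBall_trans hn hy⟩

theorem stepBall_mono_delta {δ δ' : ℝ} (h : δ ≤ δ') {x₀ : X} {n : ℕ} :
    stepBall δ x₀ n ⊆ stepBall δ' x₀ n := by
  rintro y ⟨p, hp0, hpn, hp⟩
  exact ⟨p, hp0, hpn, fun i hi => (hp i hi).trans h⟩

theorem deltaComponent_mono {δ δ' : ℝ} (h : δ ≤ δ') {x : X} :
    deltaComponent δ x ⊆ deltaComponent δ' x := by
  rintro y ⟨n, hn⟩
  exact ⟨n, stepBall_mono_delta h hn⟩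

end CEAux
namespace CEAux2
open CEAux ENat

theorem encard_biUnion_le {α β : Type*} (T : Finset β) (g : β → Set α) :
    ((⋃ b ∈ T, g b).encard : ℝ≥0∞) ≤ ∑ b ∈ T, ((g b).encard : ℝ≥0∞) := by
  classical
  induction T using Finset.induction with
  | empty => simp
  | insert _ _ hb ih =>
    rename_i a T
    rw [Finset.sum_insert hb]
    refine le_trans ?_ (add_le_add_right ih _)
    have h1 : (⋃ b ∈ insert a T, g b) = g a ∪ ⋃ b ∈ T, g b := by
      simp [Set.biUnion_insert]
    rw [h1]
    calc ((g a ∪ ⋃ b ∈ T, g b).encard : ℝ≥0∞)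
        ≤ (((g a).encard + (⋃ b ∈ T, g b).encard : ℕ∞) : ℝ≥0∞) :=
          ENat.toENNReal_le.2 (Set.encard_union_le _ _)
      _ = ((g a).encard : ℝ≥0∞) + ((⋃ b ∈ T, g b).encard : ℝ≥0∞) := ENat.toENNReal_add _ _

variable {X : Type*} [MetricSpace X]

theorem encard_le_mul_of_fibers {α β : Type*} {S : Set α} {T : Set β} (f : α → β)
    (hT : T.Finite) (hmaps : ∀ a ∈ S, f a ∈ T) {c : ℝ≥0∞}
    (hfib : ∀ b ∈ T, (({a ∈ S | f a = b}).encard : ℝ≥0∞) ≤ c) :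
    (S.encard : ℝ≥0∞) ≤ (T.encard : ℝ≥0∞) * c := by
  classical
  have hcover : S ⊆ ⋃ b ∈ hT.toFinset, {a ∈ S | f a = b} := by
    intro a ha
    exact Set.mem_biUnion (hT.mem_toFinset.2 (hmaps a ha)) ⟨ha, rfl⟩
  calc (S.encard : ℝ≥0∞) ≤ ((⋃ b ∈ hT.toFinset, {a ∈ S | f a = b}).encard : ℝ≥0∞) :=
        ENat.toENNReal_le.2 (Set.encard_le_encard hcover)
    _ ≤ ∑ b ∈ hT.toFinset, (({a ∈ S | f a = b}).encard : ℝ≥0∞) := encard_biUnion_le _ _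
    _ ≤ ∑ _b ∈ hT.toFinset, c := Finset.sum_le_sum fun b hb => hfib b (hT.mem_toFinset.1 hb)
    _ = (hT.toFinset.card : ℝ≥0∞) * c := by rw [Finset.sum_const, nsmul_eq_mul]
    _ = (T.encard : ℝ≥0∞) * c := by rw [hT.encard_eq_coe_toFinset_card, ENat.toENNReal_coe]

theorem exists_separated_subset {R : ℝ} (hR : 0 < R) {C : ℕ}
    (hC : ∀ z : X, (Metric.closedBall z R).encard ≤ C) {F : Set X} (hF : F.Finite) :
    ∃ T ⊆ F, (∀ a ∈ T, ∀ b ∈ T, a ≠ b → R ≤ dist a b) ∧ T.Finite ∧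
      (F.encard : ℝ≥0∞) ≤ (C : ℝ≥0∞) * (T.encard : ℝ≥0∞) := by
  classical
  set Fs := hF.toFinset with hFs
  set P := Fs.powerset.filter
    (fun s => ∀ a ∈ s, ∀ b ∈ s, a ≠ b → R ≤ dist a b) with hP
  have hPne : P.Nonempty := ⟨∅, by simp [hP]⟩
  obtain ⟨t, htP, htmax⟩ := Finset.exists_max_image P Finset.card hPne
  rw [hP, Finset.mem_filter, Finset.mem_powerset] at htP
  obtain ⟨htsub, htsep⟩ := htP
  have hcover : ∀ y ∈ F, ∃ a ∈ t, dist y a ≤ R := by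
    intro y hy
    by_contra hcon
    push_neg at hcon
    have hyt : y ∉ t := fun h => absurd (dist_self y ▸ hcon y h) (by simp [hR.le])
    have hmem : insert y t ∈ P := by
      rw [hP, Finset.mem_filter, Finset.mem_powerset]
      refine ⟨Finset.insert_subset (hF.mem_toFinset.2 hy) htsub, ?_⟩
      intro a ha b hb hab
      rcases Finset.mem_insert.1 ha with ha' | ha' <;>
        rcases Finset.mem_insert.1 hb with hb' | hb'
      · exact absurd (ha'.trans hb'.symm) hab
      · subst ha'; exact (hcon b hb').le
      · subst hb'; rw [dist_comm]; exact (hcon a ha').le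
      · exact htsep a ha' b hb' hab
    have := htmax _ hmem
    rw [Finset.card_insert_of_notMem hyt] at this
    omega
  refine ⟨↑t, fun a ha => hF.mem_toFinset.1 (htsub ha), ?_, t.finite_toSet, ?_⟩
  · intro a ha b hb hab; exact htsep a ha b hb hab
  · have hsub : F ⊆ ⋃ a ∈ t, Metric.closedBall a R := by
      intro y hy
      obtain ⟨a, hat, hd⟩ := hcover y hy
      exact Set.mem_biUnion hat (Metric.mem_closedBall.2 hd)
    calc (F.encard : ℝ≥0∞) ≤ ((⋃ a ∈ t, Metric.closedBall a R).encard : ℝ≥0∞) :=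
          ENat.toENNReal_le.2 (Set.encard_le_encard hsub)
      _ ≤ ∑ a ∈ t, ((Metric.closedBall a R).encard : ℝ≥0∞) := encard_biUnion_le _ _
      _ ≤ ∑ _a ∈ t, (C : ℝ≥0∞) := by
          refine Finset.sum_le_sum fun a _ => ?_
          have := ENat.toENNReal_le.2 (hC a)
          simpa using this
      _ = (t.card : ℝ≥0∞) * C := by rw [Finset.sum_const, nsmul_eq_mul]
      _ = (C : ℝ≥0∞) * ((t : Set X).encard : ℝ≥0∞) := by
          rw [mul_comm, Set.encard_coe_eq_coe_finsetCard, ENat.toENNReal_coe]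

theorem stepBall_encard_le (hbg : HasBoundedGeometry X) {δ : ℝ} (hδ : 0 ≤ δ) (x₀ : X) (n : ℕ) :
    ∃ C : ℕ, ∀ y : X, (stepBall δ y n).encard ≤ C := by
  obtain ⟨C, hC⟩ := hbg (n * δ + 1) (by positivity)
  exact ⟨C, fun y => le_trans (Set.encard_le_encard
    (le_trans stepBall_subset_closedBall (Metric.closedBall_subset_closedBall (by linarith)))) (hC y)⟩

theorem stepBall_finite (hbg : HasBoundedGeometry X) {δ : ℝ} (hδ : 0 ≤ δ) (x₀ : X) (n : ℕ) :
    (stepBall δ x₀ n).Finite := by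
  obtain ⟨C, hC⟩ := stepBall_encard_le hbg hδ x₀ n
  exact Set.finite_of_encard_le_coe (hC x₀)

theorem le_Vgrowth {δ : ℝ} {x x₀ : X} (hx₀ : x₀ ∈ deltaComponent δ x) (l : ℕ) :
    ((stepBall δ x₀ l).encard : ℝ≥0∞) ≤ Vgrowth δ x l := by
  exact le_iSup₂_of_le x₀ hx₀ le_rfl

theorem Vgrowth_ne_top (hbg : HasBoundedGeometry X) {δ : ℝ} (hδ : 0 ≤ δ) (x : X) (l : ℕ) :
    Vgrowth δ x l ≠ ⊤ := by
  obtain ⟨C, hC⟩ := stepBall_encard_le hbg hδ x l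
  have : Vgrowth δ x l ≤ (C : ℝ≥0∞) := by
    refine iSup₂_le fun x₀ _ => ?_
    have := ENat.toENNReal_le.2 (hC x₀)
    simpa using this
  exact ne_top_of_le_ne_top (by simp) this

end CEAux2
namespace CEAux3
open CEAux CEAux2 ENNReal

theorem elog_mono {a b : ℝ≥0∞} (h : a ≤ b) : elog a ≤ elog b := by
  unfold elog
  rcases eq_or_ne b ⊤ with rfl | hb
  · simp
  · have ha : a ≠ ⊤ := fun h' => hb (top_le_iff.1 (h' ▸ h))
    rw [if_neg ha, if_neg hb]
    have hab : a.toReal ≤ b.toReal := ENNReal.toReal_mono hb h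
    rcases le_or_gt a.toReal 1 with h1 | h1
    · rw [ENNReal.ofReal_eq_zero.2 (Real.log_nonpos ENNReal.toReal_nonneg h1)]
      exact zero_le
    · exact ENNReal.ofReal_le_ofReal (Real.log_le_log (by linarith) hab)

theorem elog_pow (a : ℝ≥0∞) (m : ℕ) : elog (a ^ m) = m * elog a := by
  rcases eq_or_ne a ⊤ with rfl | ha
  · rcases Nat.eq_zero_or_pos m with rfl | hm
    · simp [elog]
    · rw [ENNReal.top_pow hm.ne']
      unfold elog
      rw [if_pos rfl]
      exact (ENNReal.mul_top (by exact_mod_cast hm.ne')).symm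
  · have hpow : a ^ m ≠ ⊤ := ENNReal.pow_ne_top ha
    unfold elog
    rw [if_neg hpow, if_neg ha, ENNReal.toReal_pow, Real.log_pow]
    rcases le_or_gt (Real.log a.toReal) 0 with h1 | h1
    · rw [ENNReal.ofReal_eq_zero.2 h1, mul_zero, ENNReal.ofReal_eq_zero.2]
      exact mul_nonpos_of_nonneg_of_nonpos (by positivity) h1
    · rw [← ENNReal.ofReal_natCast m, ← ENNReal.ofReal_mul (by positivity)]

theorem elog_natCast (N : ℕ) : elog (N : ℝ≥0∞) = ENNReal.ofReal (Real.log N) := by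
  unfold elog
  rw [if_neg (by simp)]
  norm_num

theorem ofReal_le_elog {r : ℝ} {a : ℝ≥0∞} (h : ENNReal.ofReal (Real.exp r) ≤ a) :
    ENNReal.ofReal r ≤ elog a := by
  rcases eq_or_ne a ⊤ with rfl | ha
  · simp [elog]
  · unfold elog
    rw [if_neg ha]
    have h1 : Real.exp r ≤ a.toReal := by
      rw [← ENNReal.ofReal_le_iff_le_toReal ha]; exact h
    exact ENNReal.ofReal_le_ofReal (by
      calc r = Real.log (Real.exp r) := (Real.log_exp r).symm
        _ ≤ Real.log a.toReal := Real.log_le_log (Real.exp_pos r) h1)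

variable {X : Type*} [MetricSpace X]

theorem le_orbitDist {n : ℕ} {p q : ℕ → X} {R : ℝ} {i : ℕ} (hi : i ≤ n)
    (h : R ≤ dist (p i) (q i)) : R ≤ orbitDist n p q := by
  refine le_trans h ?_
  exact Finset.le_sup' (f := fun i => dist (p i) (q i))
    (Finset.mem_range.2 (Nat.lt_succ_of_le hi))

theorem exists_orbitDist_index {n : ℕ} {p q : ℕ → X} {R : ℝ} (h : R ≤ orbitDist n p q) :
    ∃ i ≤ n, R ≤ dist (p i) (q i) := by
  obtain ⟨i, hi, hEq⟩ := Finset.exists_mem_eq_sup' (s := Finset.range (n + 1)) (by simp)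
    (fun i => dist (p i) (q i))
  exact ⟨i, by simpa using Nat.lt_succ_iff.1 (Finset.mem_range.1 hi), by
    rw [orbitDist, hEq] at h; exact h⟩

theorem isPseudoOrbit_id_iff {δ : ℝ} {n : ℕ} {x₀ : X} {p : ℕ → X} :
    IsPseudoOrbit id δ n x₀ p ↔ p 0 = x₀ ∧ ∀ i < n, dist (p i) (p (i + 1)) ≤ δ :=
  Iff.rfl

theorem le_sepCard {f : X → X} {n : ℕ} {R δ : ℝ} {x₀ : X} {S : Set (ℕ → X)}
    (h1 : ∀ p ∈ S, IsPseudoOrbit f δ n x₀ p) (h2 : IsSepFamily n R S) :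
    (S.encard : ℝ≥0∞) ≤ sepCard f n R δ x₀ := by
  unfold sepCard
  exact le_iSup_of_le S (le_iSup_of_le h1 (le_iSup_of_le h2 le_rfl))

theorem sepCard_le {f : X → X} {n : ℕ} {R δ : ℝ} {x₀ : X} {c : ℝ≥0∞}
    (h : ∀ S : Set (ℕ → X), (∀ p ∈ S, IsPseudoOrbit f δ n x₀ p) → IsSepFamily n R S →
      (S.encard : ℝ≥0∞) ≤ c) : sepCard f n R δ x₀ ≤ c := by
  unfold sepCard
  exact iSup_le fun S => iSup_le fun h1 => iSup_le fun h2 => h S h1 h2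

end CEAux3
namespace CEAux4
open CEAux CEAux2 CEAux3

variable {X : Type*} [MetricSpace X]

theorem sep_count (hbg : HasBoundedGeometry X) {δ : ℝ} (hδ : 0 ≤ δ) {k : ℕ} (hk : 0 < k)
    {R : ℝ} (hR : 2 * k * δ < R) (x : X) :
    ∀ m : ℕ, ∀ n, n ≤ m * k → ∀ x₀ ∈ deltaComponent δ x,
      ∀ S : Set (ℕ → X), (∀ p ∈ S, IsPseudoOrbit id δ n x₀ p) → IsSepFamily n R S →
      (S.encard : ℝ≥0∞) ≤ (Vgrowth δ x k) ^ m := by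
  have hR0 : 0 < R := lt_of_le_of_lt (by positivity) hR
  intro m
  induction m with
  | zero =>
    intro n hn x₀ hx₀ S hS hsep
    have hn0 : n = 0 := by omega
    subst hn0
    have hsub : S.encard ≤ 1 := by
      rw [Set.encard_le_one_iff]
      intro p q hp hq
      by_contra hpq
      obtain ⟨i, hi, hd⟩ := exists_orbitDist_index (hsep p hp q hq hpq)
      have hi0 : i = 0 := by omega
      subst hi0
      rw [(hS p hp).1, (hS q hq).1, dist_self] at hd
      exact absurd hd (not_le.2 hR0)
    calc (S.encard : ℝ≥0∞) ≤ ((1 : ℕ∞) : ℝ≥0∞) := ENat.toENNReal_le.2 hsub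
      _ = 1 := ENat.toENNReal_one
      _ = (Vgrowth δ x k) ^ 0 := (pow_zero _).symm
  | succ m ih =>
    intro n hn x₀ hx₀ S hS hsep
    set k' := min k n with hk'
    have hk'n : k' ≤ n := min_le_right _ _
    have hk'k : k' ≤ k := min_le_left _ _
    set T := stepBall δ x₀ k with hT
    have hTfin : T.Finite := stepBall_finite hbg hδ x₀ k
    -- distance bound on initial segment
    have hinit : ∀ p ∈ S, ∀ q ∈ S, ∀ i ≤ k', dist (p i) (q i) ≤ 2 * k * δ := by
      intro p hp q hq i hi
      have hp' := hS p hp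
      have hq' := hS q hq
      have h1 : dist (p 0) (p i) ≤ i * δ := by
        have := dist_path_le hp'.2 (a := 0) (t := i) (by omega)
        simpa using this
      have h2 : dist (q 0) (q i) ≤ i * δ := by
        have := dist_path_le hq'.2 (a := 0) (t := i) (by omega)
        simpa using this
      have hik : (i : ℝ) * δ ≤ k * δ := by
        apply mul_le_mul_of_nonneg_right _ hδ
        exact_mod_cast le_trans hi hk'k
      calc dist (p i) (q i) ≤ dist (p i) (p 0) + dist (p 0) (q i) := dist_triangle _ _ _
        _ ≤ dist (p i) (p 0) + (dist (q 0) (q i)) := by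
            rw [hp'.1, ← hq'.1]
        _ ≤ i * δ + i * δ := add_le_add (by rw [dist_comm]; exact h1) h2
        _ ≤ k * δ + k * δ := add_le_add hik hik
        _ = 2 * k * δ := by ring
    have hmaps : ∀ p ∈ S, p k' ∈ T := by
      intro p hp
      have hp' := hS p hp
      have : p k' ∈ stepBall δ x₀ k' :=
        ⟨p, hp'.1, rfl, fun i hi => hp'.2 i (by omega)⟩
      exact stepBall_mono_len hδ hk'k this
    refine le_trans (encard_le_mul_of_fibers (fun p => p k') hTfin hmaps
      (c := (Vgrowth δ x k) ^ m) ?_) ?_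
    · intro y hy
      set Sy := {p ∈ S | p k' = y} with hSy
      set ψ : (ℕ → X) → (ℕ → X) := fun p i => p (i + k') with hψ
      have hinj : Set.InjOn ψ Sy := by
        intro p hp q hq hpq
        by_contra hne
        obtain ⟨i, hi, hd⟩ := exists_orbitDist_index
          (hsep p hp.1 q hq.1 hne)
        rcases le_or_gt i k' with hik | hik
        · exact absurd hd (not_le.2 (lt_of_le_of_lt (hinit p hp.1 q hq.1 i hik) hR))
        · have : p i = q i := by
            have h1 : p ((i - k') + k') = q ((i - k') + k') := congrFun hpq (i - k')
            rwa [Nat.sub_add_cancel hik.le] at h1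
          rw [this, dist_self] at hd
          exact absurd hd (not_le.2 hR0)
      have himage1 : ∀ p' ∈ ψ '' Sy, IsPseudoOrbit id δ (n - k') y p' := by
        rintro p' ⟨p, hp, rfl⟩
        refine ⟨by simpa [hψ] using hp.2, ?_⟩
        intro i hi
        have := (hS p hp.1).2 (i + k') (by omega)
        simpa [hψ, Nat.add_right_comm i k' 1] using this
      have himage2 : IsSepFamily (n - k') R (ψ '' Sy) := by
        rintro p' ⟨p, hp, rfl⟩ q' ⟨q, hq, rfl⟩ hne
        have hpq : p ≠ q := fun h => hne (h ▸ rfl)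
        obtain ⟨i, hi, hd⟩ := exists_orbitDist_index (hsep p hp.1 q hq.1 hpq)
        have hik : k' < i := by
          by_contra hik
          push_neg at hik
          exact absurd hd (not_le.2 (lt_of_le_of_lt (hinit p hp.1 q hq.1 i hik) hR))
        refine le_orbitDist (i := i - k') (by omega) ?_
        have h1 : (i - k') + k' = i := Nat.sub_add_cancel hik.le
        simpa [hψ, h1] using hd
      have hcomp : y ∈ deltaComponent δ x := mem_deltaComponent_of_stepBall hx₀ hy
      have hIH := ih (n - k') (by
          have h6 : (m + 1) * k = m * k + k := by ring
          rcases le_or_gt k n with h | h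
          · have : k' = k := min_eq_left h
            omega
          · have : k' = n := min_eq_right h.le
            omega) y hcomp (ψ '' Sy) himage1 himage2
      calc ((Sy.encard : ℝ≥0∞)) = ((ψ '' Sy).encard : ℝ≥0∞) := by rw [hinj.encard_image]
        _ ≤ (Vgrowth δ x k) ^ m := hIH
    · rw [pow_succ]
      rw [mul_comm ((Vgrowth δ x k) ^ m) _]
      exact mul_le_mul_left (le_Vgrowth hx₀ k) _

theorem sepCard_le_pow (hbg : HasBoundedGeometry X) {δ : ℝ} (hδ : 0 ≤ δ) {k : ℕ} (hk : 0 < k)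
    {R : ℝ} (hR : 2 * k * δ < R) (x : X) (n : ℕ) :
    sepCard id n R δ x ≤ (Vgrowth δ x k) ^ (n / k + 1) := by
  refine sepCard_le fun S h1 h2 => ?_
  refine sep_count hbg hδ hk hR x (n / k + 1) n ?_ x (self_mem_deltaComponent δ x) S h1 h2
  have h3 : k * (n / k) + n % k = n := Nat.div_add_mod n k
  have h4 := Nat.mod_lt n hk
  have h5 : (n / k + 1) * k = k * (n / k) + k := by ring
  omega

end CEAux4
namespace CEAux5
open CEAux CEAux2 CEAux3 CEAux4 Filter

variable {X : Type*} [MetricSpace X]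

theorem part_one (hbg : HasBoundedGeometry X) (x : X)
    (H : ∀ δ : ℝ, 0 < δ →
      Tendsto (fun l : ℕ => elog (Vgrowth δ x l) / (l : ℝ≥0∞)) atTop (nhds 0)) :
    coarseEntropyAt (id : X → X) x = 0 := by
  refine le_antisymm ?_ zero_le
  unfold coarseEntropyAt
  refine iSup₂_le fun δ hδ => ?_
  refine ENNReal.le_of_forall_pos_le_add fun ε hε _ => ?_
  rw [zero_add]
  set ε' : ℝ≥0∞ := (ε : ℝ≥0∞) / 2 with hε'
  have hε'0 : 0 < ε' := ENNReal.div_pos (by exact_mod_cast hε.ne') (by simp)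
  have hev : ∀ᶠ l : ℕ in atTop, elog (Vgrowth δ x l) / (l : ℝ≥0∞) < ε' :=
    (H δ hδ).eventually_lt_const hε'0
  obtain ⟨N, hN⟩ := eventually_atTop.1 hev
  set k := max N 1 with hkdef
  have hk1 : 1 ≤ k := le_max_right _ _
  have hk0 : 0 < k := hk1
  have hkN : N ≤ k := le_max_left _ _
  have hEk : elog (Vgrowth δ x k) / (k : ℝ≥0∞) < ε' := hN k hkN
  set E := elog (Vgrowth δ x k) with hE
  have hElt : E < ε' * k := by
    rw [← ENNReal.div_lt_iff (Or.inl (by exact_mod_cast hk0.ne')) (Or.inl (by simp))]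
    exact hEk
  set R : ℝ := 2 * k * δ + 1 with hRdef
  have hR0 : 0 < R := by positivity
  have hRgt : 2 * k * δ < R := by simp [hRdef]
  refine le_trans (iInf₂_le R hR0) ?_
  refine le_trans (limsup_le_of_le (by isBoundedDefault) ?_) (le_refl (ε : ℝ≥0∞))
  filter_upwards [eventually_ge_atTop k] with n hn
  have hb1 : elog (sepCard id n R δ x) ≤ ((n / k + 1 : ℕ) : ℝ≥0∞) * E := by
    refine le_trans (elog_mono (sepCard_le_pow hbg hδ.le hk0 hRgt x n)) ?_
    rw [elog_pow]
  have hb2 : ((n / k + 1 : ℕ) : ℝ≥0∞) * E ≤ (ε : ℝ≥0∞) * n := by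
    calc ((n / k + 1 : ℕ) : ℝ≥0∞) * E ≤ ((n / k + 1 : ℕ) : ℝ≥0∞) * (ε' * k) :=
          mul_le_mul_right hElt.le _
      _ = ε' * (((n / k + 1) * k : ℕ) : ℝ≥0∞) := by push_cast; ring
      _ ≤ ε' * ((2 * n : ℕ) : ℝ≥0∞) := by
          refine mul_le_mul_right ?_ _
          have h3 : k * (n / k) + n % k = n := Nat.div_add_mod n k
          have h4 := Nat.mod_lt n hk0
          have h5 : (n / k + 1) * k = k * (n / k) + k := by ring
          have : (n / k + 1) * k ≤ 2 * n := by omega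
          exact_mod_cast this
      _ = (ε : ℝ≥0∞) * n := by
          push_cast
          rw [hε', div_eq_mul_inv]
          rw [show (ε : ℝ≥0∞) * 2⁻¹ * (2 * (n : ℝ≥0∞)) = (ε : ℝ≥0∞) * (2⁻¹ * 2) * n by ring]
          rw [ENNReal.inv_mul_cancel (by simp) (by simp), mul_one]
  exact ENNReal.div_le_of_le_mul (hb1.trans hb2)

end CEAux5
namespace CEAux6
open CEAux CEAux2 CEAux3 Filter

variable {X : Type*} [MetricSpace X]

theorem pow_le_sepCard {δ R : ℝ} {x x₀ : X} {m l : ℕ} (hl : 0 < l)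
    (hx₀ : x₀ ∈ stepBall δ x m) {T : Set X} (hTfin : T.Finite)
    (hTsub : T ⊆ stepBall δ x₀ l)
    (hTsep : ∀ a ∈ T, ∀ b ∈ T, a ≠ b → R ≤ dist a b) (j : ℕ) :
    ((T.ncard : ℝ≥0∞)) ^ j ≤ sepCard id (m + 2 * l * j) R δ x := by
  classical
  have hl2 : 0 < 2 * l := by omega
  set n := m + 2 * l * j with hn
  obtain ⟨a, ha0, ham, hastep⟩ := hx₀
  -- choice of paths to each point of T
  have hbex : ∀ y : X, ∃ p : ℕ → X, p 0 = x₀ ∧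
      (y ∈ stepBall δ x₀ l → (p l = y ∧ ∀ i < l, dist (p i) (p (i + 1)) ≤ δ)) := by
    intro y
    by_cases h : y ∈ stepBall δ x₀ l
    · obtain ⟨p, h1, h2, h3⟩ := h
      exact ⟨p, h1, fun _ => ⟨h2, h3⟩⟩
    · exact ⟨fun _ => x₀, rfl, fun h' => absurd h' h⟩
  choose b hb0 hbspec using hbex
  -- the loop path: out and back
  set c : X → ℕ → X := fun y s => if s ≤ l then b y s else b y (2 * l - s) with hc
  have hc0 : ∀ y, c y 0 = x₀ := by
    intro y; simp only [hc, if_pos (Nat.zero_le l)]; exact hb0 y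
  have hc2l : ∀ y, c y (2 * l) = x₀ := by
    intro y
    simp only [hc, if_neg (by omega : ¬ 2 * l ≤ l)]
    simpa using hb0 y
  have hcl : ∀ y ∈ T, c y l = y := by
    intro y hy
    simp only [hc, if_pos le_rfl]
    exact (hbspec y (hTsub hy)).1
  have hcstep : ∀ y ∈ T, ∀ s, s < 2 * l → dist (c y s) (c y (s + 1)) ≤ δ := by
    intro y hy s hs
    have hsteps := (hbspec y (hTsub hy)).2
    rcases le_or_gt (s + 1) l with h1 | h1
    · simp only [hc, if_pos (by omega : s ≤ l), if_pos h1]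
      exact hsteps s (by omega)
    · rcases le_or_gt s l with h2 | h2
      · have hsl : s = l := by omega
        rw [hsl]
        simp only [hc, if_pos le_rfl, if_neg (by omega : ¬ l + 1 ≤ l)]
        have h3 : 2 * l - (l + 1) = l - 1 := by omega
        rw [h3, dist_comm]
        have := hsteps (l - 1) (by omega)
        rwa [show l - 1 + 1 = l by omega] at this
      · simp only [hc, if_neg (by omega : ¬ s ≤ l), if_neg (by omega : ¬ s + 1 ≤ l)]
        have h3 : 2 * l - s = (2 * l - (s + 1)) + 1 := by omega
        rw [h3, dist_comm]
        exact hsteps _ (by omega)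
  -- division helpers
  have hdiv : ∀ q s, s < 2 * l → (2 * l * q + s) / (2 * l) = q ∧ (2 * l * q + s) % (2 * l) = s := by
    intro q s hs
    constructor
    · rw [Nat.mul_add_div hl2, Nat.div_eq_of_lt hs, Nat.add_zero]
    · rw [Nat.mul_add_mod, Nat.mod_eq_of_lt hs]
  -- the branching pseudo-orbits
  set P : (ℕ → X) → ℕ → X :=
    fun w i => if i < m then a i else c (w ((i - m) / (2 * l))) ((i - m) % (2 * l)) with hP
  have hPge : ∀ w i, m ≤ i → P w i = c (w ((i - m) / (2 * l))) ((i - m) % (2 * l)) := by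
    intro w i hi
    simp only [hP, if_neg (by omega : ¬ i < m)]
  have hPm : ∀ w, P w m = x₀ := by
    intro w
    rw [hPge w m le_rfl]
    simp [hc0]
  have hP0 : ∀ w, P w 0 = x := by
    intro w
    rcases Nat.eq_zero_or_pos m with hm | hm
    · have h1 := hPm w
      rw [hm] at h1 ham
      rw [h1, ← ham, ha0]
    · simp only [hP, if_pos hm]
      exact ha0
  have hPat : ∀ w q, w q ∈ T → P w (m + (2 * l * q + l)) = w q := by
    intro w q hq
    rw [hPge w _ (by omega), Nat.add_sub_cancel_left,
      (hdiv q l (by omega)).1, (hdiv q l (by omega)).2]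
    exact hcl _ hq
  have hPstep : ∀ w, (∀ q, q < j → w q ∈ T) → ∀ i, i < n → dist (P w i) (P w (i + 1)) ≤ δ := by
    intro w hw i hi
    rcases lt_or_ge i m with him | him
    · have h1 : P w i = a i := by simp only [hP, if_pos him]
      have h2 : P w (i + 1) = a (i + 1) := by
        rcases lt_or_ge (i + 1) m with h3 | h3
        · simp only [hP, if_pos h3]
        · have h4 : i + 1 = m := by omega
          rw [h4, hPm w, ← h4] at *
          rw [h4, ← ham]
      rw [h1, h2]
      exact hastep i him
    · set t := i - m with ht
      set q := t / (2 * l) with hq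
      set s := t % (2 * l) with hs
      have hts : 2 * l * q + s = t := Nat.div_add_mod t (2 * l)
      have hslt : s < 2 * l := Nat.mod_lt _ hl2
      have hqj : q < j := by
        have h5 : t < 2 * l * j := by omega
        rw [hq, Nat.div_lt_iff_lt_mul hl2]
        have h6 : j * (2 * l) = 2 * l * j := by ring
        omega
      have h7 : P w i = c (w q) s := by
        rw [hPge w i him, ← ht, ← hq, ← hs]
      rcases lt_or_ge (s + 1) (2 * l) with h8 | h8
      · have h9 : P w (i + 1) = c (w q) (s + 1) := by
          rw [hPge w (i + 1) (by omega)]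
          have h10 : i + 1 - m = 2 * l * q + (s + 1) := by omega
          rw [h10, (hdiv q (s + 1) h8).1, (hdiv q (s + 1) h8).2]
        rw [h7, h9]
        exact hcstep (w q) (hw q hqj) s hslt
      · have h8' : s + 1 = 2 * l := by omega
        have h9 : P w (i + 1) = c (w (q + 1)) 0 := by
          rw [hPge w (i + 1) (by omega)]
          have h10 : i + 1 - m = 2 * l * (q + 1) + 0 := by
            have : 2 * l * (q + 1) = 2 * l * q + 2 * l := by ring
            omega
          rw [h10, (hdiv (q + 1) 0 hl2).1, (hdiv (q + 1) 0 hl2).2]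
        rw [h7, h9, hc0, ← hc2l (w q), ← h8']
        exact hcstep (w q) (hw q hqj) s hslt
  -- the injection from tuples
  haveI : Fintype T := hTfin.fintype
  set ext : (Fin j → T) → ℕ → X :=
    fun g q => if h : q < j then (g ⟨q, h⟩ : X) else x₀ with hext
  have hextT : ∀ g q (h : q < j), ext g q ∈ T ∧ ext g q = (g ⟨q, h⟩ : X) := by
    intro g q h
    constructor
    · simp only [hext, dif_pos h]
      exact (g ⟨q, h⟩).2
    · simp only [hext, dif_pos h]
  set Φ : (Fin j → T) → ℕ → X := fun g => P (ext g) with hΦ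
  have hΦval : ∀ g (q : Fin j), Φ g (m + (2 * l * q + l)) = (g q : X) := by
    intro g q
    simp only [hΦ]
    have h1 := hextT g q q.2
    rw [hPat (ext g) q h1.1, h1.2]
  have hidx_le : ∀ q : Fin j, m + (2 * l * q + l) ≤ n := by
    intro q
    have h1 : (q : ℕ) + 1 ≤ j := q.2
    have h2 : 2 * l * ((q : ℕ) + 1) ≤ 2 * l * j := Nat.mul_le_mul_left _ h1
    have h3 : 2 * l * ((q : ℕ) + 1) = 2 * l * q + 2 * l := by ring
    omega
  have hΦinj : Function.Injective Φ := by
    intro g g' hgg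
    by_contra hne
    have : ∃ q, g q ≠ g' q := by
      by_contra h
      push_neg at h
      exact hne (funext h)
    obtain ⟨q, hq⟩ := this
    have h1 : (g q : X) ≠ (g' q : X) := Subtype.coe_ne_coe.2 hq
    have h2 := hΦval g q
    have h3 := hΦval g' q
    rw [hgg] at h2
    exact h1 (h2.symm.trans h3)
  set S : Set (ℕ → X) := Set.range Φ with hS
  have h1 : ∀ p ∈ S, IsPseudoOrbit id δ n x p := by
    rintro p ⟨g, rfl⟩
    refine ⟨hP0 _, ?_⟩
    intro i hi
    exact hPstep (ext g) (fun q hq => (hextT g q hq).1) i hi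
  have h2 : IsSepFamily n R S := by
    rintro p ⟨g, rfl⟩ p' ⟨g', rfl⟩ hne
    have hgg : g ≠ g' := fun h => hne (h ▸ rfl)
    have : ∃ q, g q ≠ g' q := by
      by_contra h
      push_neg at h
      exact hgg (funext h)
    obtain ⟨q, hq⟩ := this
    refine le_orbitDist (i := m + (2 * l * q + l)) (hidx_le q) ?_
    rw [hΦval g q, hΦval g' q]
    exact hTsep _ (g q).2 _ (g' q).2 (Subtype.coe_ne_coe.2 hq)
  have hcard : (S.encard : ℝ≥0∞) = ((T.ncard : ℝ≥0∞)) ^ j := by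
    have e1 : S.encard = ((T.ncard ^ j : ℕ) : ℕ∞) := by
      rw [hS, ← Set.image_univ, (hΦinj.injOn).encard_image, Set.encard_univ]
      rw [ENat.card_eq_coe_fintype_card]
      congr 1
      rw [Fintype.card_fun, Fintype.card_fin]
      congr 1
      rw [Set.ncard_eq_toFinset_card', Set.toFinset_card]
    rw [e1]
    push_cast
    rfl
  rw [← hcard]
  exact le_sepCard h1 h2

end CEAux6
namespace CEAux7
open CEAux CEAux2 CEAux3 CEAux6 Filter

variable {X : Type*} [MetricSpace X]

theorem inf_limsup_ge (hbg : HasBoundedGeometry X) {δ : ℝ} (hδ : 0 < δ) (x : X) {r : ℝ}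
    (hr : 0 < r)
    (Hfreq : ∃ᶠ l : ℕ in atTop, ∃ x₀ ∈ deltaComponent δ x,
      ENNReal.ofReal (Real.exp (r * l)) < ((stepBall δ x₀ l).encard : ℝ≥0∞)) :
    ENNReal.ofReal (r / 4) ≤ ⨅ (R : ℝ) (_ : 0 < R),
      Filter.atTop.limsup fun n : ℕ => elog (sepCard id n R δ x) / (n : ℝ≥0∞) := by
  refine le_iInf₂ fun R hR => ?_
  obtain ⟨C, hC⟩ := hbg R hR
  have hC1 : 1 ≤ C := by
    have h1 : ({x} : Set X).encard ≤ (Metric.closedBall x R).encard :=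
      Set.encard_le_encard (by simp [Metric.mem_closedBall, hR.le])
    have h2 := (h1.trans (hC x))
    rw [Set.encard_singleton] at h2
    exact_mod_cast h2
  have hCpos : (0:ℝ) < C := by exact_mod_cast hC1
  obtain ⟨l₀, hl₀⟩ := exists_nat_gt (2 * Real.log C / r)
  obtain ⟨l, hlge, x₀, hx₀comp, hbig⟩ := frequently_atTop.1 Hfreq (l₀ + 1)
  have hl1 : 1 ≤ l := by omega
  have hlogC : 2 * Real.log C < r * l := by
    have h1 : (l₀ : ℝ) ≤ l := by exact_mod_cast Nat.le_of_succ_le hlge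
    have h2 : 2 * Real.log C < r * l₀ := by
      rw [div_lt_iff₀ hr] at hl₀
      linarith
    nlinarith
  -- greedy separated subset
  have hFfin : (stepBall δ x₀ l).Finite := stepBall_finite hbg hδ.le x₀ l
  obtain ⟨T, hTsub, hTsep, hTfin, hTcount⟩ := exists_separated_subset hR hC hFfin
  haveI : Fintype T := hTfin.fintype
  set N := T.ncard with hN
  have hTenc : (T.encard : ℝ≥0∞) = (N : ℝ≥0∞) := by
    rw [hTfin.encard_eq_coe_toFinset_card, hN, Set.ncard_eq_toFinset_card']
    simp
    rw [← hTfin.cast_ncard_eq, ENat.toENNReal_coe]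
  -- lower bound on N
  have hCN : Real.exp (r * l) < (C : ℝ) * N := by
    have h1 : ENNReal.ofReal (Real.exp (r * l)) < (C : ℝ≥0∞) * (N : ℝ≥0∞) := by
      calc ENNReal.ofReal (Real.exp (r * l)) < ((stepBall δ x₀ l).encard : ℝ≥0∞) := hbig
        _ ≤ (C : ℝ≥0∞) * (T.encard : ℝ≥0∞) := hTcount
        _ = (C : ℝ≥0∞) * (N : ℝ≥0∞) := by rw [hTenc]
    have h2 : ((C * N : ℕ) : ℝ≥0∞) = (C : ℝ≥0∞) * (N : ℝ≥0∞) := by push_cast; ring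
    rw [← h2, ENNReal.ofReal_lt_iff_lt_toReal (Real.exp_pos _).le (ENNReal.natCast_ne_top _)] at h1
    simpa using h1
  have hNpos : 0 < N := by
    by_contra h
    push_neg at h
    interval_cases N
    simp at hCN
    nlinarith [Real.exp_pos (r * l)]
  set e₀ : ℝ := r * l - Real.log C with he₀
  have he₀pos : r * l / 2 < e₀ := by
    rw [he₀]
    linarith
  have hNlow : ENNReal.ofReal e₀ ≤ elog (N : ℝ≥0∞) := by
    refine ofReal_le_elog ?_
    have h1 : Real.exp e₀ ≤ (N : ℝ) := by
      rw [he₀, Real.exp_sub, Real.exp_log hCpos]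
      rw [div_le_iff₀ hCpos]
      nlinarith
    calc ENNReal.ofReal (Real.exp e₀) ≤ ENNReal.ofReal (N : ℝ) := ENNReal.ofReal_le_ofReal h1
      _ = (N : ℝ≥0∞) := ENNReal.ofReal_natCast N
  obtain ⟨m, hm⟩ := hx₀comp
  -- frequent lower bound for the limsup
  refine le_limsup_of_frequently_le ?_ (by isBoundedDefault)
  rw [frequently_atTop]
  intro Nbig
  obtain ⟨j₁, hj₁⟩ := exists_nat_ge ((r * m / 4) / (e₀ - r * l / 2))
  set j := max (max j₁ Nbig) 1 with hj
  have hjj₁ : (j₁ : ℝ) ≤ j := by exact_mod_cast le_trans (le_max_left _ _) (le_max_left _ _)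
  have hjNbig : Nbig ≤ j := le_trans (le_max_right _ _) (le_max_left _ _)
  have hj1 : 1 ≤ j := le_max_right _ _
  set n := m + 2 * l * j with hn
  have hnNbig : Nbig ≤ n := by
    have : j ≤ 2 * l * j := by nlinarith
    omega
  have hn1 : 1 ≤ n := by
    have h9 : 2 * l * j = 2 * (l * j) := by ring
    have h10 : 1 * 1 ≤ l * j := Nat.mul_le_mul hl1 hj1
    omega
  refine ⟨n, hnNbig, ?_⟩
  -- the real inequality
  have hkey : r / 4 * n ≤ j * e₀ := by
    have h1 : (r * m / 4) ≤ (j : ℝ) * (e₀ - r * l / 2) := by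
      have h2 : (r * m / 4) / (e₀ - r * l / 2) * (e₀ - r * l / 2) ≤ (j : ℝ) * (e₀ - r * l / 2) := by
        apply mul_le_mul_of_nonneg_right (le_trans hj₁ hjj₁) (by linarith)
      rwa [div_mul_cancel₀ _ (by linarith : e₀ - r * l / 2 ≠ 0)] at h2
    have h3 : (n : ℝ) = m + 2 * l * j := by rw [hn]; push_cast; ring
    rw [h3]
    nlinarith
  have hchain : ENNReal.ofReal (r / 4) ≤ ((j : ℝ≥0∞) * elog (N : ℝ≥0∞)) / (n : ℝ≥0∞) := by
    have h1 : ENNReal.ofReal (r / 4) * (n : ℝ≥0∞) ≤ (j : ℝ≥0∞) * ENNReal.ofReal e₀ := by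
      rw [← ENNReal.ofReal_natCast n, ← ENNReal.ofReal_mul (by positivity),
        ← ENNReal.ofReal_natCast j, ← ENNReal.ofReal_mul (by positivity)]
      exact ENNReal.ofReal_le_ofReal hkey
    have h2 : ENNReal.ofReal (r / 4) * (n : ℝ≥0∞) ≤ (j : ℝ≥0∞) * elog (N : ℝ≥0∞) :=
      h1.trans (mul_le_mul_right hNlow _)
    calc ENNReal.ofReal (r / 4)
        = ENNReal.ofReal (r / 4) * (n : ℝ≥0∞) / (n : ℝ≥0∞) := by
          rw [mul_div_assoc, ENNReal.div_self (by simp only [ne_eq, Nat.cast_eq_zero]; omega)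
            (by simp), mul_one]
      _ ≤ ((j : ℝ≥0∞) * elog (N : ℝ≥0∞)) / (n : ℝ≥0∞) := ENNReal.div_le_div_right h2 _
  refine hchain.trans ?_
  refine ENNReal.div_le_div_right ?_ _
  calc (j : ℝ≥0∞) * elog (N : ℝ≥0∞) = elog ((N : ℝ≥0∞) ^ j) := (elog_pow _ _).symm
    _ ≤ elog (sepCard id n R δ x) := elog_mono (by
        rw [hn]
        exact pow_le_sepCard hl1 hm hTfin hTsub hTsep j)

end CEAux7
namespace CEAux8
open CEAux CEAux2 CEAux3 CEAux7 Filter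

variable {X : Type*} [MetricSpace X]

theorem part_two (hbg : HasBoundedGeometry X) (x : X)
    (H : ∃ δ : ℝ, 0 < δ ∧
      0 < Filter.atTop.limsup fun l : ℕ => elog (Vgrowth δ x l) / (l : ℝ≥0∞)) :
    coarseEntropyAt (id : X → X) x = ⊤ := by
  obtain ⟨δ, hδ, hpos⟩ := H
  set f := fun l : ℕ => elog (Vgrowth δ x l) / (l : ℝ≥0∞) with hf
  obtain ⟨r, hr, hrlt⟩ : ∃ r : ℝ, 0 < r ∧ ENNReal.ofReal r < atTop.limsup f := by
    rcases eq_or_ne (atTop.limsup f) ⊤ with htop | hne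
    · exact ⟨1, one_pos, by rw [htop]; exact ENNReal.ofReal_lt_top⟩
    · refine ⟨(atTop.limsup f).toReal / 2, ?_, ?_⟩
      · have := ENNReal.toReal_pos hpos.ne' hne; linarith
      · calc ENNReal.ofReal ((atTop.limsup f).toReal / 2)
            < ENNReal.ofReal ((atTop.limsup f).toReal) := by
              refine (ENNReal.ofReal_lt_ofReal_iff (ENNReal.toReal_pos hpos.ne' hne)).2 ?_
              have := ENNReal.toReal_pos hpos.ne' hne; linarith
          _ = atTop.limsup f := ENNReal.ofReal_toReal hne
  have hfreq0 : ∃ᶠ l : ℕ in atTop, ENNReal.ofReal r < f l :=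
    frequently_lt_of_lt_limsup (by isBoundedDefault) hrlt
  have hfreq : ∃ᶠ l : ℕ in atTop, ∃ x₀ ∈ deltaComponent δ x,
      ENNReal.ofReal (Real.exp (r * l)) < ((stepBall δ x₀ l).encard : ℝ≥0∞) := by
    refine ((hfreq0.and_eventually (eventually_ge_atTop 1)).mono ?_)
    rintro l ⟨hl, hl1⟩
    have hVne : Vgrowth δ x l ≠ ⊤ := Vgrowth_ne_top hbg hδ.le x l
    have hl0 : ((l : ℝ≥0∞)) ≠ 0 := by
      simp only [ne_eq, Nat.cast_eq_zero]; omega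
    have h1 : ENNReal.ofReal r * (l : ℝ≥0∞) < elog (Vgrowth δ x l) := by
      rw [hf] at hl
      exact (ENNReal.lt_div_iff_mul_lt (Or.inl hl0) (Or.inl (by simp))).1 hl
    have h2 : ENNReal.ofReal (r * l) < elog (Vgrowth δ x l) := by
      rw [ENNReal.ofReal_mul hr.le, ENNReal.ofReal_natCast]; exact h1
    have h3 : elog (Vgrowth δ x l) = ENNReal.ofReal (Real.log (Vgrowth δ x l).toReal) := by
      unfold elog; rw [if_neg hVne]
    rw [h3] at h2
    have hrl : 0 < r * l := by
      have : (1:ℝ) ≤ l := by exact_mod_cast hl1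
      nlinarith
    have h4 : r * l < Real.log (Vgrowth δ x l).toReal := by
      by_contra h4
      push_neg at h4
      exact h2.not_ge (ENNReal.ofReal_le_ofReal h4)
    have hu1 : 1 < (Vgrowth δ x l).toReal := by
      by_contra h5
      push_neg at h5
      have := Real.log_nonpos ENNReal.toReal_nonneg h5
      linarith
    have h6 : Real.exp (r * l) < (Vgrowth δ x l).toReal := by
      have h7 := Real.exp_lt_exp.2 h4
      rwa [Real.exp_log (by linarith)] at h7
    have h7 : ENNReal.ofReal (Real.exp (r * l)) < Vgrowth δ x l := by
      calc ENNReal.ofReal (Real.exp (r * l)) < ENNReal.ofReal (Vgrowth δ x l).toReal :=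
            (ENNReal.ofReal_lt_ofReal_iff (by linarith)).2 h6
        _ = Vgrowth δ x l := ENNReal.ofReal_toReal hVne
    rw [Vgrowth, lt_iSup_iff] at h7
    obtain ⟨x₀, h8⟩ := h7
    rw [lt_iSup_iff] at h8
    obtain ⟨hx₀, h9⟩ := h8
    exact ⟨x₀, hx₀, h9⟩
  -- scaling to κ * δ
  have hmain : ∀ κ : ℕ, 1 ≤ κ →
      ENNReal.ofReal ((κ : ℝ) * r / 2 / 4) ≤ coarseEntropyAt (id : X → X) x := by
    intro κ hκ
    have hκR : (1:ℝ) ≤ (κ:ℝ) := by exact_mod_cast hκ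
    have hδ' : 0 < (κ : ℝ) * δ := by nlinarith
    have hr' : 0 < (κ : ℝ) * r / 2 := by nlinarith
    have hscale : ∃ᶠ l : ℕ in atTop, ∃ x₀ ∈ deltaComponent ((κ : ℝ) * δ) x,
        ENNReal.ofReal (Real.exp (((κ : ℝ) * r / 2) * l)) <
          ((stepBall ((κ : ℝ) * δ) x₀ l).encard : ℝ≥0∞) := by
      rw [frequently_atTop]
      intro Nbig
      obtain ⟨l', hl'ge, x₀, hx₀, hbig⟩ := frequently_atTop.1 hfreq (max κ (κ * Nbig))
      have hl'κ : κ ≤ l' := le_trans (le_max_left _ _) hl'ge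
      have hl'N : κ * Nbig ≤ l' := le_trans (le_max_right _ _) hl'ge
      set l := (l' + κ - 1) / κ with hldef
      have hκ0 : 0 < κ := hκ
      have hdm : κ * ((l' + κ - 1) / κ) + (l' + κ - 1) % κ = l' + κ - 1 :=
        Nat.div_add_mod _ _
      have hmod : (l' + κ - 1) % κ < κ := Nat.mod_lt _ hκ0
      have hκl_ge : l' ≤ κ * l := by rw [hldef]; omega
      have hκl_le : κ * l ≤ l' + κ - 1 := by rw [hldef]; omega
      have hlN : Nbig ≤ l := by
        have h1 : κ * Nbig ≤ κ * l := le_trans hl'N hκl_ge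
        exact Nat.le_of_mul_le_mul_left h1 hκ0
      refine ⟨l, hlN, x₀, deltaComponent_mono (le_mul_of_one_le_left hδ.le hκR) hx₀, ?_⟩
      have hsub : stepBall δ x₀ l' ⊆ stepBall ((κ : ℝ) * δ) x₀ l := by
        refine le_trans (stepBall_mono_len hδ.le hκl_ge) ?_
        exact stepBall_compress hδ.le hκ0
      have hexp : ((κ : ℝ) * r / 2) * l ≤ r * l' := by
        have h2 : (κ * l : ℕ) ≤ 2 * l' := by omega
        have h3 : ((κ : ℝ) * l) ≤ 2 * l' := by exact_mod_cast h2
        nlinarith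
      calc ENNReal.ofReal (Real.exp (((κ : ℝ) * r / 2) * l))
          ≤ ENNReal.ofReal (Real.exp (r * l')) :=
            ENNReal.ofReal_le_ofReal (Real.exp_le_exp.2 hexp)
        _ < ((stepBall δ x₀ l').encard : ℝ≥0∞) := hbig
        _ ≤ ((stepBall ((κ : ℝ) * δ) x₀ l).encard : ℝ≥0∞) :=
            ENat.toENNReal_le.2 (Set.encard_le_encard hsub)
    have hA := inf_limsup_ge hbg hδ' x hr' hscale
    unfold coarseEntropyAt
    exact le_iSup₂_of_le ((κ : ℝ) * δ) hδ' hA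
  by_contra hne
  have hlt : coarseEntropyAt (id : X → X) x ≠ ⊤ := hne
  obtain ⟨κ, hκgt⟩ := exists_nat_gt ((coarseEntropyAt (id : X → X) x).toReal * 8 / r)
  have hκ1 : 1 ≤ κ + 1 := by omega
  have h1 := hmain (κ + 1) hκ1
  rw [ENNReal.ofReal_le_iff_le_toReal hlt] at h1
  have hκR : ((κ : ℝ)) < (κ + 1 : ℕ) := by push_cast; linarith
  have h2 : (coarseEntropyAt (id : X → X) x).toReal * 8 / r < ((κ + 1 : ℕ) : ℝ) :=
    lt_trans hκgt hκR
  rw [div_lt_iff₀ hr] at hκgt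
  have h3 : (coarseEntropyAt (id : X → X) x).toReal * 8 < ((κ + 1 : ℕ) : ℝ) * r := by
    push_cast at *
    nlinarith
  linarith [h1, h3]

end CEAux8


/-- For a metric space `X` with bounded geometry and a basepoint `x`:
(i) if `lim_{l→∞} (1/l) log V_δ(l) = 0` for all `δ > 0`, then `h_∞(X) = 0`;
(ii) if `limsup_{l→∞} (1/l) log V_δ(l) > 0` for some `δ > 0`, then `h_∞(X) = ∞`. -/
theorem coarseEntropy_dichotomy_boundedGeometry {X : Type*} [MetricSpace X]
    (hbg : HasBoundedGeometry X) (x : X) :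
    ((∀ δ : ℝ, 0 < δ →
        Filter.Tendsto (fun l : ℕ => elog (Vgrowth δ x l) / (l : ℝ≥0∞))
          Filter.atTop (nhds 0)) →
      coarseEntropyAt (id : X → X) x = 0) ∧
    ((∃ δ : ℝ, 0 < δ ∧
        0 < Filter.atTop.limsup fun l : ℕ => elog (Vgrowth δ x l) / (l : ℝ≥0∞)) →
      coarseEntropyAt (id : X → X) x = ⊤) := by
  exact ⟨fun H => CEAux5.part_one hbg x H, fun H => CEAux8.part_two hbg x H⟩
end

section
/- Let (X, d, μ) be a metric measure space such that there exists r > 0 with inf_{x∈X} μ(B(x,r)) > 0, and fix a basepoint x₀ ∈ X. If lim_{l→∞} (1/l) log vol_δ^{x₀}(l) = 0 for all δ > 0, then the coarse entropy of X is zero: h_∞(X) = 0. -/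
open Filter Set Metric
open scoped ENNReal

/-- `vol_δ^x(l) = sup_{x₀ ∈ [x]_δ} μ(B_δ(x₀, l))`. -/
noncomputable def volGrowth {X : Type*} [MetricSpace X] [MeasurableSpace X]
    (μ : MeasureTheory.Measure X) (δ : ℝ) (x : X) (l : ℕ) : ℝ≥0∞ :=
  ⨆ x₀ ∈ deltaComponent δ x, μ (stepBall δ x₀ l)


section CoarseEntropyAux
open MeasureTheory

section aux
variable {X : Type*} [MetricSpace X] {δ : ℝ} {x y z : X} {a b l : ℕ}

lemma mem_stepBall_self (hδ : 0 ≤ δ) : x ∈ stepBall δ x l :=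
  ⟨fun _ => x, rfl, rfl, fun _ _ => by simpa using hδ⟩

lemma stepBall_trans (hy : y ∈ stepBall δ x a) (hz : z ∈ stepBall δ y b) :
    z ∈ stepBall δ x (a + b) := by
  obtain ⟨p, hp0, hpa, hp⟩ := hy
  obtain ⟨q, hq0, hqb, hq⟩ := hz
  refine ⟨fun i => if i < a then p i else q (i - a), ?_, ?_, ?_⟩
  · by_cases h : 0 < a
    · simpa [h] using hp0
    · simp only [Nat.not_lt, Nat.le_zero] at h
      subst h
      simp only [if_neg (lt_irrefl 0)]
      rw [hq0, ← hp0, hpa]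
  · have h1 : ¬ a + b < a := by omega
    simp only [if_neg h1, Nat.add_sub_cancel_left, hqb]
  · intro i hi
    rcases lt_trichotomy (i + 1) a with h | h | h
    · have hia : i < a := by omega
      simpa [hia, h] using hp i hia
    · have hia : i < a := by omega
      have h1 : ¬ i + 1 < a := by omega
      have h2 : i + 1 - a = 0 := by omega
      simp only [if_pos hia, if_neg h1, h2]
      rw [hq0, ← hpa, ← h]
      exact hp i hia
    · have hia : ¬ i < a := by omega
      have h1 : ¬ i + 1 < a := by omega
      have h2 : i + 1 - a = (i - a) + 1 := by omega
      simp only [if_neg hia, if_neg h1, h2]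
      exact hq (i - a) (by omega)

lemma stepBall_mono (hδ : 0 ≤ δ) (hab : a ≤ b) : stepBall δ x a ⊆ stepBall δ x b := by
  intro y hy
  have := stepBall_trans hy (mem_stepBall_self hδ (l := b - a) (x := y))
  rwa [Nat.add_sub_cancel' hab] at this

lemma mem_stepBall_one (h : dist x y ≤ δ) : y ∈ stepBall δ x 1 := by
  refine ⟨fun i => if i = 0 then x else y, by simp, by simp, ?_⟩
  intro i hi
  interval_cases i
  simpa using h

lemma closedBall_subset_stepBall {r : ℝ} (hr : r ≤ δ) :
    closedBall x r ⊆ stepBall δ x 1 := fun y hy =>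
  mem_stepBall_one ((dist_comm x y ▸ (mem_closedBall.1 hy)).trans hr)

lemma mem_deltaComponent_of_stepBall (h : y ∈ stepBall δ x l) : y ∈ deltaComponent δ x := ⟨l, h⟩

lemma self_mem_deltaComponent (hδ : 0 ≤ δ) : x ∈ deltaComponent δ x :=
  ⟨0, mem_stepBall_self hδ⟩

lemma dist_le_of_path {p : ℕ → X} {n : ℕ} (hδ : 0 ≤ δ)
    (hp : ∀ i < n, dist (p i) (p (i + 1)) ≤ δ) {a t : ℕ} (h : a + t ≤ n) :
    dist (p a) (p (a + t)) ≤ δ * t := by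
  induction t with
  | zero => simp
  | succ t ih =>
    have h1 : a + t ≤ n := by omega
    calc dist (p a) (p (a + (t+1))) ≤ dist (p a) (p (a + t)) + dist (p (a + t)) (p (a + t + 1)) := by
          rw [show a + (t + 1) = a + t + 1 from rfl]; exact dist_triangle _ _ _
      _ ≤ δ * t + δ := add_le_add (ih h1) (hp (a + t) (by omega))
      _ = δ * (t + 1) := by ring
      _ = δ * ((t : ℝ) + 1) := by norm_num
    norm_num

lemma subpath_mem {p : ℕ → X} {n : ℕ} (hp : ∀ i < n, dist (p i) (p (i + 1)) ≤ δ)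
    {a b : ℕ} (hab : a ≤ b) (hbn : b ≤ n) : p b ∈ stepBall δ (p a) (b - a) := by
  refine ⟨fun t => p (a + t), by simp, by simp only []; rw [Nat.add_sub_cancel' hab], ?_⟩
  intro i hi
  exact hp (a + i) (by omega)

end aux

section measureaux
variable {X : Type*} [MetricSpace X] [MeasurableSpace X] [BorelSpace X]
  (μ : Measure X) {δ : ℝ} {x₀ : X}

lemma le_volGrowth {z : X} {l : ℕ} (hz : z ∈ deltaComponent δ x₀) :
    μ (stepBall δ z l) ≤ volGrowth μ δ x₀ l :=
  le_iSup₂ (f := fun y (_ : y ∈ deltaComponent δ x₀) => μ (stepBall δ y l)) z hz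

lemma volGrowth_mono (hδ : 0 ≤ δ) {a b : ℕ} (hab : a ≤ b) :
    volGrowth μ δ x₀ a ≤ volGrowth μ δ x₀ b :=
  iSup₂_mono fun z _ => measure_mono (stepBall_mono hδ hab)

/-- A maximal-cardinality packing yields a net. -/
lemma exists_net {r : ℝ} (hrpos : 0 < r) {c : ℝ≥0∞} (hc : ∀ x : X, c ≤ μ (closedBall x r))
    (hc0 : c ≠ 0) {ρ : ℝ} (hρ : 2 * r < ρ) (A B : Set X)
    (hAB : ∀ y ∈ A, closedBall y r ⊆ B) (hB : μ B ≠ ⊤) :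
    ∃ F : Finset X, ↑F ⊆ A ∧ (F.card : ℝ≥0∞) * c ≤ μ B ∧
      ∀ a ∈ A, ∃ y ∈ F, dist a y ≤ ρ := by
  classical
  set 𝒮 : Set (Finset X) := {F | ↑F ⊆ A ∧ (F : Set X).Pairwise fun a b => ρ < dist a b} with h𝒮
  have hcount : ∀ F ∈ 𝒮, (F.card : ℝ≥0∞) * c ≤ μ B := by
    rintro F ⟨hFA, hFsep⟩
    have hdisj : (F : Set X).PairwiseDisjoint fun y => closedBall y r := by
      intro u hu v hv huv
      exact closedBall_disjoint_closedBall (by linarith [hFsep hu hv huv])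
    have hmeas : μ (⋃ y ∈ F, closedBall y r) = ∑ y ∈ F, μ (closedBall y r) :=
      measure_biUnion_finset hdisj fun y _ => measurableSet_closedBall
    calc (F.card : ℝ≥0∞) * c = F.card • c := by rw [nsmul_eq_mul]
      _ ≤ ∑ y ∈ F, μ (closedBall y r) := Finset.card_nsmul_le_sum _ _ _ fun y _ => hc y
      _ = μ (⋃ y ∈ F, closedBall y r) := hmeas.symm
      _ ≤ μ B := measure_mono (Set.iUnion₂_subset fun y hy => hAB y (hFA hy))
  have h2 : μ B / c ≠ ⊤ := (ENNReal.div_lt_top hB hc0).ne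
  obtain ⟨N, hN⟩ := ENNReal.exists_nat_gt h2
  have hcard : ∀ F ∈ 𝒮, F.card ≤ N := by
    intro F hF
    have h1 : (F.card : ℝ≥0∞) ≤ μ B / c :=
      (ENNReal.le_div_iff_mul_le (Or.inl hc0) (Or.inr hB)).2 (hcount F hF)
    exact_mod_cast (h1.trans hN.le)
  -- pick an element of 𝒮 of maximal cardinality
  set cards : Set ℕ := Finset.card '' 𝒮 with hcards
  have hne : cards.Nonempty := ⟨0, ∅, ⟨by simp [h𝒮], by simp⟩, rfl⟩
  have hbdd : BddAbove cards := by
    refine ⟨N, ?_⟩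
    rintro n ⟨F, hF, rfl⟩
    exact hcard F hF
  obtain ⟨F, hF𝒮, hFcard⟩ := Nat.sSup_mem hne hbdd
  refine ⟨F, hF𝒮.1, hcount F hF𝒮, ?_⟩
  intro a ha
  by_contra hcon
  push_neg at hcon
  have haF : a ∉ F := fun hmem => absurd (le_of_eq (dist_self a)) (not_le.2 (by
    have := hcon a hmem; linarith))
  have hins : insert a F ∈ 𝒮 := by
    constructor
    · intro u hu
      rcases Finset.mem_insert.1 (by exact_mod_cast hu) with rfl | hu'
      · exact ha
      · exact hF𝒮.1 hu'
    · rw [Finset.coe_insert]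
      refine Set.Pairwise.insert hF𝒮.2 ?_
      intro u hu hau
      have h1 := hcon u hu
      exact ⟨h1, by rwa [dist_comm]⟩
  have : (insert a F).card ≤ sSup cards := le_csSup hbdd ⟨_, hins, rfl⟩
  rw [Finset.card_insert_of_notMem haF, hFcard] at this
  omega

end measureaux

section cover
variable {X : Type*} [MetricSpace X] [MeasurableSpace X] [BorelSpace X]
  (μ : Measure X) {x₀ : X} {Δ r : ℝ} {c : ℝ≥0∞} {k : ℕ}

/-- Construction of a covering family of `(k+1)`-step chains, of controlled cardinality,
that `Δ`-covers all `k`-step chains starting at `x₀`. -/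
lemma exists_cover (hrpos : 0 < r) (hrΔ : 2 * r < Δ)
    (hc : ∀ x : X, c ≤ μ (closedBall x r)) (hc0 : c ≠ 0) (hk : 1 ≤ k)
    (hV : volGrowth μ Δ x₀ (3 * k) ≠ ⊤) (m : ℕ) :
    ∃ C : Finset (ℕ → X),
      (∀ z ∈ C, z 0 = x₀ ∧ ∀ j < m, z (j + 1) ∈ stepBall Δ (z j) (k + 1)) ∧
      (C.card : ℝ≥0∞) * c ^ m ≤ (volGrowth μ Δ x₀ (3 * k)) ^ m ∧
      (∀ w : ℕ → X, w 0 = x₀ → (∀ j < m, w (j + 1) ∈ stepBall Δ (w j) k) →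
        ∃ z ∈ C, ∀ j ≤ m, dist (w j) (z j) ≤ Δ) := by
  classical
  have hΔ0 : 0 < Δ := by linarith
  set V := volGrowth μ Δ x₀ (3 * k) with hVdef
  induction m with
  | zero =>
    refine ⟨{fun _ => x₀}, ?_, by simp, ?_⟩
    · intro z hz
      rw [Finset.mem_singleton] at hz
      subst hz
      exact ⟨rfl, fun j hj => absurd hj (Nat.not_lt_zero j)⟩
    · intro w hw0 _
      refine ⟨fun _ => x₀, Finset.mem_singleton_self _, ?_⟩
      intro j hj
      interval_cases j
      simpa [hw0] using hΔ0.le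
  | succ m ih =>
    obtain ⟨C, hCchain, hCcard, hCcover⟩ := ih
    -- for each z ∈ C, z m is in the δ-component of x₀
    have hcomp : ∀ z ∈ C, z m ∈ deltaComponent Δ x₀ := by
      intro z hz
      have : ∀ j ≤ m, z j ∈ deltaComponent Δ x₀ := by
        intro j hj
        induction j with
        | zero => exact (hCchain z hz).1 ▸ self_mem_deltaComponent hΔ0.le
        | succ j ihj =>
          obtain ⟨L, hL⟩ := ihj (by omega)
          exact ⟨L + (k + 1), stepBall_trans hL ((hCchain z hz).2 j (by omega))⟩
      exact this m le_rfl
    -- choose a net in `stepBall Δ (z m) (k+1)` for each z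
    have hnet : ∀ z ∈ C, ∃ F : Finset X, ↑F ⊆ stepBall Δ (z m) (k + 1) ∧
        (F.card : ℝ≥0∞) * c ≤ V ∧
        ∀ a ∈ stepBall Δ (z m) (k + 1), ∃ y ∈ F, dist a y ≤ Δ := by
      intro z hz
      have hsub : stepBall Δ (z m) (k + 2) ⊆ stepBall Δ (z m) (3 * k) :=
        stepBall_mono hΔ0.le (by omega)
      have hμB : μ (stepBall Δ (z m) (k + 2)) ≤ V :=
        le_trans (measure_mono hsub) (le_volGrowth μ (hcomp z hz))
      obtain ⟨F, hF1, hF2, hF3⟩ := exists_net μ hrpos hc hc0 hrΔ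
        (stepBall Δ (z m) (k + 1)) (stepBall Δ (z m) (k + 2))
        (by
          intro y hy u hu
          have h1 : u ∈ stepBall Δ y 1 := closedBall_subset_stepBall (by linarith) hu
          have h2 : u ∈ stepBall Δ (z m) ((k + 1) + 1) := stepBall_trans hy h1
          exact stepBall_mono hΔ0.le (by omega) h2)
        (fun ht => hV (top_le_iff.1 (ht ▸ hμB)))
      exact ⟨F, hF1, le_trans hF2 hμB, hF3⟩
    choose! net hnet1 hnet2 hnet3 using hnet
    refine ⟨C.biUnion fun z => (net z).image (Function.update z (m + 1)), ?_, ?_, ?_⟩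
    · intro z' hz'
      rw [Finset.mem_biUnion] at hz'
      obtain ⟨z, hz, hz'mem⟩ := hz'
      rw [Finset.mem_image] at hz'mem
      obtain ⟨y, hy, rfl⟩ := hz'mem
      obtain ⟨hz0, hzstep⟩ := hCchain z hz
      refine ⟨by rw [Function.update_of_ne (by omega) _ _]; exact hz0, ?_⟩
      intro j hj
      rcases Nat.lt_or_ge j m with hjm | hjm
      · rw [Function.update_of_ne (by omega) _ _, Function.update_of_ne (by omega) _ _]
        exact hzstep j hjm
      · have hjeq : j = m := by omega
        subst hjeq
        rw [Function.update_self, Function.update_of_ne (by omega) _ _]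
        exact hnet1 z hz hy
    · calc ((C.biUnion fun z => (net z).image (Function.update z (m + 1))).card : ℝ≥0∞) * c ^ (m + 1)
          ≤ (∑ z ∈ C, ((net z).image (Function.update z (m + 1))).card : ℝ≥0∞) * c ^ (m + 1) := by
            gcongr
            exact_mod_cast Finset.card_biUnion_le
        _ = (∑ z ∈ C, (((net z).image (Function.update z (m + 1))).card : ℝ≥0∞)) * c ^ (m + 1) := by
            push_cast
            ring
        _ ≤ (∑ z ∈ C, ((net z).card : ℝ≥0∞)) * c ^ (m + 1) := by
            gcongr with z hz
            exact_mod_cast Finset.card_image_le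
        _ = (∑ z ∈ C, ((net z).card : ℝ≥0∞) * c) * c ^ m := by
            rw [Finset.sum_mul, Finset.sum_mul, pow_succ]
            congr 1
            ext z
            ring
        _ ≤ (∑ _z ∈ C, V) * c ^ m := by
            gcongr with z hz
            exact hnet2 z hz
        _ = V * ((C.card : ℝ≥0∞) * c ^ m) := by
            rw [Finset.sum_const, nsmul_eq_mul]
            ring
        _ ≤ V * V ^ m := by gcongr
        _ = V ^ (m + 1) := by rw [pow_succ]; ring
    · intro w hw0 hwstep
      obtain ⟨z, hz, hzd⟩ := hCcover w hw0 (fun j hj => hwstep j (by omega))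
      have hwm1 : w (m + 1) ∈ stepBall Δ (z m) (k + 1) := by
        have h1 : w m ∈ stepBall Δ (z m) 1 :=
          mem_stepBall_one (by rw [dist_comm]; exact hzd m le_rfl)
        have h2 := stepBall_trans h1 (hwstep m (by omega))
        rwa [Nat.add_comm 1 k] at h2
      obtain ⟨y, hy, hdy⟩ := hnet3 z hz _ hwm1
      refine ⟨Function.update z (m + 1) y, ?_, ?_⟩
      · rw [Finset.mem_biUnion]
        exact ⟨z, hz, Finset.mem_image_of_mem _ hy⟩
      · intro j hj
        rcases Nat.lt_or_ge j (m + 1) with hjm | hjm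
        · rw [Function.update_of_ne (by omega) _ _]
          exact hzd j (by omega)
        · have : j = m + 1 := by omega
          subst this
          rw [Function.update_self]
          exact hdy

end cover

section elogaux

lemma elog_mono {x y : ℝ≥0∞} (hxy : x ≤ y) : elog x ≤ elog y := by
  unfold elog
  rcases eq_or_ne y ⊤ with rfl | hy
  · simp
  have hx : x ≠ ⊤ := fun hx => hy (top_le_iff.1 (hx ▸ hxy))
  rw [if_neg hx, if_neg hy]
  rcases eq_or_lt_of_le (zero_le : (0 : ℝ≥0∞) ≤ x) with hx0 | hx0
  · simp [← hx0, Real.log_zero]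
  · exact ENNReal.ofReal_le_ofReal (Real.log_le_log (ENNReal.toReal_pos hx0.ne' hx)
      (ENNReal.toReal_le_toReal hx hy |>.2 hxy))

lemma elog_mul_le {x y : ℝ≥0∞} : elog (x * y) ≤ elog x + elog y := by
  unfold elog
  rcases eq_or_ne x ⊤ with rfl | hx
  · rcases eq_or_ne y 0 with rfl | hy0
    · simp [Real.log_zero]
    · simp [ENNReal.top_mul hy0]
  rcases eq_or_ne y ⊤ with rfl | hy
  · rcases eq_or_ne x 0 with rfl | hx0
    · simp [Real.log_zero]
    · simp [ENNReal.mul_top hx0, if_neg hx]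
  rw [if_neg hx, if_neg hy, if_neg (ENNReal.mul_ne_top hx hy), ENNReal.toReal_mul]
  rcases eq_or_ne x.toReal 0 with hx0 | hx0
  · simp [hx0, Real.log_zero]
  rcases eq_or_ne y.toReal 0 with hy0 | hy0
  · simp [hy0, Real.log_zero]
  rw [Real.log_mul hx0 hy0]
  exact ENNReal.ofReal_add_le

lemma elog_pow_le {x : ℝ≥0∞} (m : ℕ) : elog (x ^ m) ≤ m * elog x := by
  induction m with
  | zero => simp [elog]
  | succ m ih =>
    rw [pow_succ]
    calc elog (x ^ m * x) ≤ elog (x ^ m) + elog x := elog_mul_le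
      _ ≤ m * elog x + elog x := by gcongr
      _ = (m + 1 : ℕ) * elog x := by push_cast; ring

lemma elog_ne_top {x : ℝ≥0∞} (hx : x ≠ ⊤) : elog x ≠ ⊤ := by
  simp [elog, if_neg hx]

end elogaux

section sepbound
variable {X : Type*} [MetricSpace X] [MeasurableSpace X] [BorelSpace X]
  (μ : Measure X) {x₀ : X} {Δ r δ : ℝ} {c : ℝ≥0∞} {k n : ℕ}

lemma sepCard_le (hrpos : 0 < r) (hrΔ : 2 * r < Δ) (hδΔ : δ ≤ Δ)
    (hc : ∀ x : X, c ≤ μ (closedBall x r)) (hc0 : c ≠ 0) (hk : 1 ≤ k)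
    (hV : volGrowth μ Δ x₀ (3 * k) ≠ ⊤) (n : ℕ) :
    sepCard (id : X → X) n (2 * Δ * (k + 1) + 1) δ x₀ * c ^ (n / k) ≤
      (volGrowth μ Δ x₀ (3 * k)) ^ (n / k) := by
  classical
  have hΔ0 : 0 < Δ := by linarith
  set m := n / k with hm
  set R : ℝ := 2 * Δ * (k + 1) + 1 with hR
  obtain ⟨C, hCchain, hCcard, hCcover⟩ := exists_cover μ hrpos hrΔ hc hc0 hk hV m
  have key : ∀ S : Set (ℕ → X), (∀ p ∈ S, IsPseudoOrbit (id : X → X) δ n x₀ p) →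
      IsSepFamily n R S → (S.encard : ℝ≥0∞) ≤ (C.card : ℝ≥0∞) := by
    intro S hSorb hSsep
    -- the sampled tuple of `p ∈ S` is a `k`-step chain
    have hsample : ∀ p ∈ S, ∃ z ∈ C, ∀ j ≤ m, dist (p (j * k)) (z j) ≤ Δ := by
      intro p hp
      obtain ⟨hp0, hpstep⟩ := hSorb p hp
      simp only [id] at hpstep
      have hstepΔ : ∀ i < n, dist (p i) (p (i + 1)) ≤ Δ := fun i hi => (hpstep i hi).trans hδΔ
      refine hCcover (fun j => p (j * k)) (by show p (0 * k) = x₀; rw [Nat.zero_mul]; exact hp0) ?_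
      intro j hj
      have h1 : (j + 1) * k ≤ n := by
        have : j + 1 ≤ n / k := by omega
        calc (j + 1) * k ≤ (n / k) * k := Nat.mul_le_mul_right k this
          _ ≤ n := Nat.div_mul_le_self n k
      have := subpath_mem hstepΔ (Nat.mul_le_mul_right k (by omega : j ≤ j + 1)) h1
      have heq : (j + 1) * k - j * k = k := by
        rw [Nat.add_mul, one_mul, Nat.add_sub_cancel_left]
      rwa [heq] at this
    choose! zfun hzC hzd using hsample
    have hmaps : Set.MapsTo zfun S ↑C := fun p hp => hzC p hp
    have hinj : Set.InjOn zfun S := by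
      intro p hp q hq hzeq
      by_contra hne
      have hRle := hSsep p hp q hq hne
      obtain ⟨i, hi, hsup⟩ := Finset.exists_mem_eq_sup' (s := Finset.range (n + 1))
        (by simp) (fun i => dist (p i) (q i))
      rw [orbitDist] at hRle
      rw [hsup] at hRle
      rw [Finset.mem_range] at hi
      have hin : i ≤ n := by omega
      set j := i / k with hj
      have hjm : j ≤ m := Nat.div_le_div_right hin
      have hjk : j * k + i % k = i := by rw [hj, Nat.mul_comm]; exact Nat.div_add_mod i k
      obtain ⟨hp0, hpstep⟩ := hSorb p hp
      obtain ⟨hq0, hqstep⟩ := hSorb q hq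
      simp only [id] at hpstep hqstep
      have hpΔ : ∀ i' < n, dist (p i') (p (i' + 1)) ≤ Δ := fun i' hi' => (hpstep i' hi').trans hδΔ
      have hqΔ : ∀ i' < n, dist (q i') (q (i' + 1)) ≤ Δ := fun i' hi' => (hqstep i' hi').trans hδΔ
      have hle : j * k + i % k ≤ n := by omega
      have hmk : ((i % k : ℕ) : ℝ) ≤ (k : ℝ) := by
        exact_mod_cast (Nat.mod_lt i (by omega : 0 < k)).le
      have hdp : dist (p (j * k)) (p i) ≤ Δ * k := by
        have h0 := dist_le_of_path hΔ0.le hpΔ (a := j * k) (t := i % k) hle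
        rw [hjk] at h0
        calc dist (p (j * k)) (p i) ≤ Δ * ((i % k : ℕ) : ℝ) := h0
          _ ≤ Δ * k := by nlinarith
      have hdq : dist (q (j * k)) (q i) ≤ Δ * k := by
        have h0 := dist_le_of_path hΔ0.le hqΔ (a := j * k) (t := i % k) hle
        rw [hjk] at h0
        calc dist (q (j * k)) (q i) ≤ Δ * ((i % k : ℕ) : ℝ) := h0
          _ ≤ Δ * k := by nlinarith
      -- sampled points far apart
      have hfar : 2 * Δ + 1 ≤ dist (p (j * k)) (q (j * k)) := by
        have htri : dist (p i) (q i) ≤ dist (p i) (p (j * k)) + dist (p (j * k)) (q (j * k))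
            + dist (q (j * k)) (q i) := dist_triangle4 _ _ _ _
        rw [dist_comm (p i) (p (j * k))] at htri
        have : (k : ℝ) ≥ 0 := by positivity
        nlinarith [hRle, hdp, hdq]
      -- but both close to the same center
      have h1 := hzd p hp j hjm
      have h2 := hzd q hq j hjm
      rw [hzeq] at h1
      have : dist (p (j * k)) (q (j * k)) ≤ 2 * Δ := by
        have := dist_triangle (p (j * k)) (zfun q j) (q (j * k))
        rw [dist_comm (zfun q j) (q (j * k))] at this
        linarith
      linarith
    have hccc : S.encard ≤ (C.card : ℕ∞) := by
      calc S.encard = (zfun '' S).encard := (hinj.encard_image).symm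
        _ ≤ (↑C : Set (ℕ → X)).encard := Set.encard_mono (Set.image_subset_iff.2 hmaps)
        _ = (C.card : ℕ∞) := Set.encard_coe_eq_coe_finsetCard C
    exact_mod_cast hccc
  have hsep_le : sepCard (id : X → X) n R δ x₀ ≤ (C.card : ℝ≥0∞) := by
    refine iSup_le fun S => iSup_le fun h1 => iSup_le fun h2 => ?_
    exact_mod_cast key S h1 h2
  calc sepCard (id : X → X) n R δ x₀ * c ^ m ≤ (C.card : ℝ≥0∞) * c ^ m := by gcongr
    _ ≤ (volGrowth μ Δ x₀ (3 * k)) ^ m := hCcard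

end sepbound

section final
open MeasureTheory

lemma tendsto_const_div' {a : ℝ≥0∞} (ha : a ≠ ⊤) :
    Tendsto (fun n : ℕ => a / n) atTop (nhds 0) := by
  rw [ENNReal.tendsto_nhds_zero]
  intro ε hε
  rcases eq_or_ne ε ⊤ with rfl | hεtop
  · filter_upwards with n using le_top
  obtain ⟨N, hN⟩ := ENNReal.exists_nat_gt (ENNReal.div_lt_top ha hε.ne').ne
  filter_upwards [eventually_ge_atTop N] with n hn
  have h1 : a ≤ ε * n := by
    calc a = a / ε * ε := (ENNReal.div_mul_cancel hε.ne' hεtop).symm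
      _ ≤ (N : ℝ≥0∞) * ε := by gcongr <;> exact hN.le
      _ ≤ (n : ℝ≥0∞) * ε := by gcongr <;> exact_mod_cast hn
      _ = ε * n := mul_comm _ _
  rwa [ENNReal.div_le_iff_le_mul (Or.inr hεtop) (Or.inl (ENNReal.natCast_ne_top n))]

lemma div_nat_le_div_nat {x y : ℝ≥0∞} {n k : ℕ} (hk : k ≠ 0) (hn : n ≠ 0)
    (hxy : x * k ≤ y * n) : x / n ≤ y / k := by
  have hkt : (k : ℝ≥0∞) ≠ ⊤ := ENNReal.natCast_ne_top k
  have hk0 : (k : ℝ≥0∞) ≠ 0 := Nat.cast_ne_zero.2 hk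
  have hnt : (n : ℝ≥0∞) ≠ ⊤ := ENNReal.natCast_ne_top n
  have hn0 : (n : ℝ≥0∞) ≠ 0 := Nat.cast_ne_zero.2 hn
  rw [ENNReal.le_div_iff_mul_le (Or.inl hk0) (Or.inl hkt), div_eq_mul_inv]
  calc x * ((n : ℝ≥0∞))⁻¹ * (k : ℝ≥0∞) = x * (k : ℝ≥0∞) * ((n : ℝ≥0∞))⁻¹ := by ring
    _ ≤ y * (n : ℝ≥0∞) * ((n : ℝ≥0∞))⁻¹ := by gcongr
    _ = y * ((n : ℝ≥0∞) * ((n : ℝ≥0∞))⁻¹) := by ring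
    _ = y := by rw [ENNReal.mul_inv_cancel hn0 hnt, mul_one]

lemma volGrowth_ne_top' {X : Type*} [MetricSpace X] [MeasurableSpace X] [BorelSpace X]
    (μ : Measure X) {Δ : ℝ} {x₀ : X} (hΔ : 0 < Δ)
    (hh : Tendsto (fun l : ℕ => elog (volGrowth μ Δ x₀ l) / l) atTop (nhds 0)) (l : ℕ) :
    volGrowth μ Δ x₀ l ≠ ⊤ := by
  intro htop
  have hev : ∀ᶠ l' : ℕ in atTop, elog (volGrowth μ Δ x₀ l') / l' < 1 :=
    hh.eventually_lt_const zero_lt_one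
  obtain ⟨l', hl1, hl2⟩ := ((eventually_ge_atTop (max l 1)).and hev).exists
  have htop' : volGrowth μ Δ x₀ l' = ⊤ :=
    top_le_iff.1 (htop ▸ volGrowth_mono μ hΔ.le (le_trans (le_max_left _ _) hl1))
  rw [htop'] at hl2
  have he : elog (⊤ : ℝ≥0∞) = ⊤ := if_pos rfl
  rw [he] at hl2
  have : (⊤ : ℝ≥0∞) / l' = ⊤ :=
    ENNReal.div_eq_top.2 (Or.inr ⟨rfl, ENNReal.natCast_ne_top l'⟩)
  rw [this] at hl2
  exact absurd hl2 (by simp)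

end final

end CoarseEntropyAux

/-- Let `(X,d,μ)` be a metric measure space such that for some `r > 0`
the measures of closed `r`-balls are uniformly bounded away from zero, and fix a
basepoint `x₀`. If `lim_{l→∞} (1/l) log vol_δ^{x₀}(l) = 0` for all `δ > 0`, then the
coarse entropy of `X` is zero. -/
theorem coarseEntropy_zero_of_measure_subexp {X : Type*} [MetricSpace X]
    [MeasurableSpace X] [BorelSpace X] (μ : MeasureTheory.Measure X)
    (hr : ∃ r : ℝ, 0 < r ∧ 0 < ⨅ x : X, μ (Metric.closedBall x r)) (x₀ : X)
    (h : ∀ δ : ℝ, 0 < δ →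
      Filter.Tendsto (fun l : ℕ => elog (volGrowth μ δ x₀ l) / (l : ℝ≥0∞))
        Filter.atTop (nhds 0)) :
    coarseEntropyAt (id : X → X) x₀ = 0 := by
  --

  obtain ⟨r, hrpos, hcpos⟩ := hr
  set c : ℝ≥0∞ := ⨅ x : X, μ (Metric.closedBall x r) with hcdef
  have hc : ∀ x : X, c ≤ μ (Metric.closedBall x r) := fun x => iInf_le _ x
  have hc0 : c ≠ 0 := hcpos.ne'
  rw [coarseEntropyAt]
  refine le_antisymm (iSup₂_le fun δ hδ => ?_) zero_le
  set Δ : ℝ := max δ (2 * r + 1) with hΔdef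
  have hδΔ : δ ≤ Δ := le_max_left _ _
  have hrΔ : 2 * r < Δ := lt_of_lt_of_le (by linarith) (le_max_right _ _)
  have hΔ0 : 0 < Δ := lt_of_lt_of_le (by linarith) (le_max_right _ _)
  have hh := h Δ hΔ0
  have hVne : ∀ l, volGrowth μ Δ x₀ l ≠ ⊤ := volGrowth_ne_top' μ hΔ0 hh
  have hcT : c ≠ ⊤ := by
    intro hT
    refine hVne 1 (top_le_iff.1 ?_)
    calc (⊤ : ℝ≥0∞) = c := hT.symm
      _ ≤ μ (Metric.closedBall x₀ r) := hc x₀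
      _ ≤ μ (stepBall Δ x₀ 1) := MeasureTheory.measure_mono (closedBall_subset_stepBall (by linarith))
      _ ≤ volGrowth μ Δ x₀ 1 := le_volGrowth μ (self_mem_deltaComponent hΔ0.le)
  set φ : ℕ → ℝ≥0∞ := fun k =>
    3 * (elog (volGrowth μ Δ x₀ (3 * k)) / ((3 * k : ℕ) : ℝ≥0∞)) + elog c⁻¹ / (k : ℝ≥0∞)
    with hφdef
  have hbound : ∀ k : ℕ, 1 ≤ k →
      (Filter.atTop.limsup fun n : ℕ =>
        elog (sepCard (id : X → X) n (2 * Δ * (k + 1) + 1) δ x₀) / (n : ℝ≥0∞)) ≤ φ k := by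
    intro k hk
    set V := volGrowth μ Δ x₀ (3 * k) with hVdef
    have hVt : V ≠ ⊤ := hVne _
    have hcinvT : c⁻¹ ≠ ⊤ := ENNReal.inv_ne_top.2 hc0
    refine Filter.limsup_le_of_le (by isBoundedDefault) ?_
    filter_upwards [eventually_ge_atTop 1] with n hn
    set m := n / k with hm
    have hsep := sepCard_le μ hrpos hrΔ hδΔ hc hc0 hk hVt n
    have hsc : sepCard (id : X → X) n (2 * Δ * (k + 1) + 1) δ x₀ ≤ (V * c⁻¹) ^ m := by
      have h1 : sepCard (id : X → X) n (2 * Δ * (k + 1) + 1) δ x₀ ≤ V ^ m / c ^ m :=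
        (ENNReal.le_div_iff_mul_le (Or.inl (pow_ne_zero m hc0))
          (Or.inl (ENNReal.pow_ne_top hcT))).2 hsep
      rw [div_eq_mul_inv] at h1
      calc sepCard (id : X → X) n (2 * Δ * (k + 1) + 1) δ x₀ ≤ V ^ m * (c ^ m)⁻¹ := h1
        _ = (V * c⁻¹) ^ m := by rw [mul_pow, ENNReal.inv_pow]
    have h2 : elog (sepCard (id : X → X) n (2 * Δ * (k + 1) + 1) δ x₀) ≤
        (m : ℝ≥0∞) * (elog V + elog c⁻¹) := by
      calc elog (sepCard (id : X → X) n (2 * Δ * (k + 1) + 1) δ x₀)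
          ≤ elog ((V * c⁻¹) ^ m) := elog_mono hsc
        _ ≤ (m : ℝ≥0∞) * elog (V * c⁻¹) := elog_pow_le m
        _ ≤ (m : ℝ≥0∞) * (elog V + elog c⁻¹) := by gcongr; exact elog_mul_le
    have h3 : elog (sepCard (id : X → X) n (2 * Δ * (k + 1) + 1) δ x₀) / (n : ℝ≥0∞) ≤
        (elog V + elog c⁻¹) / (k : ℝ≥0∞) := by
      refine le_trans (ENNReal.div_le_div_right h2 _) ?_
      refine div_nat_le_div_nat (by omega) (by omega) ?_
      calc (m : ℝ≥0∞) * (elog V + elog c⁻¹) * (k : ℝ≥0∞)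
          = (elog V + elog c⁻¹) * ((m * k : ℕ) : ℝ≥0∞) := by push_cast; ring
        _ ≤ (elog V + elog c⁻¹) * (n : ℝ≥0∞) := by
            gcongr
            exact_mod_cast Nat.div_mul_le_self n k
    refine h3.trans ?_
    rw [ENNReal.add_div]
    have h4 : elog V / (k : ℝ≥0∞) = 3 * (elog V / ((3 * k : ℕ) : ℝ≥0∞)) := by
      rw [← mul_div_assoc]
      push_cast
      rw [ENNReal.mul_div_mul_left _ _ (by norm_num) (by norm_num)]
    rw [h4]
  refine ENNReal.le_of_forall_pos_le_add fun ε hε _ => ?_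
  rw [zero_add]
  have h3k : Filter.Tendsto (fun k : ℕ => 3 * k) atTop atTop :=
    tendsto_atTop_atTop.2 fun b => ⟨b, fun a ha => by omega⟩
  have h1 : Filter.Tendsto (fun k : ℕ =>
      elog (volGrowth μ Δ x₀ (3 * k)) / ((3 * k : ℕ) : ℝ≥0∞)) atTop (nhds 0) := hh.comp h3k
  have h2 : Filter.Tendsto (fun k : ℕ =>
      3 * (elog (volGrowth μ Δ x₀ (3 * k)) / ((3 * k : ℕ) : ℝ≥0∞))) atTop (nhds 0) := by
    have := ENNReal.Tendsto.const_mul (a := 3) h1 (Or.inr (by norm_num))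
    simpa using this
  have h3 := tendsto_const_div' (elog_ne_top (ENNReal.inv_ne_top.2 hc0))
  have hφt : Filter.Tendsto φ atTop (nhds 0) := by
    have := h2.add h3
    simpa [hφdef] using this
  have hev := (ENNReal.tendsto_nhds_zero.1 hφt) ε (by exact_mod_cast hε)
  obtain ⟨k, hk⟩ := ((eventually_ge_atTop 1).and hev).exists
  have hRpos : (0 : ℝ) < 2 * Δ * (k + 1) + 1 := by
    have hk0 : (0:ℝ) ≤ (k:ℝ) := Nat.cast_nonneg k
    nlinarith
  calc (⨅ (R : ℝ) (_ : 0 < R), Filter.atTop.limsup fun n : ℕ =>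
        elog (sepCard (id : X → X) n R δ x₀) / (n : ℝ≥0∞))
      ≤ Filter.atTop.limsup (fun n : ℕ =>
        elog (sepCard (id : X → X) n (2 * Δ * (k + 1) + 1) δ x₀) / (n : ℝ≥0∞)) :=
        iInf₂_le _ hRpos
    _ ≤ φ k := hbound k hk.1
    _ ≤ ε := hk.2
end
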